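/- arXiv:2503.10449 — 10 statements merged into one kernel-verified Lean document; each statement's English description precedes it below -/
import Mathlib

section
/- For a C-pseudo-cone K, the support function satisfies h_K(u) = sup_{v ∈ Ω_C} ⟨u,v⟩ ρ_K(v) for all u ∈ Ω_{C°}, where h_K(u) = sup_{y ∈ K} ⟨u,y⟩. -/
open Set Metric Pointwise

noncomputable section

abbrev E (n : ℕ) := EuclideanSpace ℝ (Fin n)

/-- A closed convex pointed cone with nonempty interior. -/
def IsGoodCone {n : ℕ} (C : Set (E n)) : Prop :=
  IsClosed C ∧ Convex ℝ C ∧ (∀ x ∈ C, ∀ r : ℝ, 0 ≤ r → r • x ∈ C) ∧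
    (∀ x ∈ C, -x ∈ C → x = 0) ∧ (interior C).Nonempty

/-- A `C`-pseudo-cone. -/
def IsPseudoCone {n : ℕ} (C K : Set (E n)) : Prop :=
  K.Nonempty ∧ IsClosed K ∧ Convex ℝ K ∧ K ⊆ C ∧ (0 : E n) ∉ K ∧ K + C = K

/-- The dual cone of `C`. -/
def dualCone {n : ℕ} (C : Set (E n)) : Set (E n) := {x | ∀ y ∈ C, (inner ℝ x y : ℝ) ≤ 0}

/-- Ω_C = S^{n-1} ∩ int C. -/
def Omega {n : ℕ} (C : Set (E n)) : Set (E n) := {v | ‖v‖ = 1} ∩ interior C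

/-- Radial function. -/
def radial {n : ℕ} (K : Set (E n)) (v : E n) : ℝ := sInf {r : ℝ | 0 < r ∧ r • v ∈ K}

/-- Support function. -/
def suppFn {n : ℕ} (K : Set (E n)) (u : E n) : ℝ := sSup ((fun y => (inner ℝ u y : ℝ)) '' K)

/-- Copolar set. -/
def copolar {n : ℕ} (K : Set (E n)) : Set (E n) := {x | ∀ y ∈ K, (inner ℝ x y : ℝ) ≤ -1}

/-- Convexification of `f`. -/
def convexif {n : ℕ} (C : Set (E n)) (f : E n → ℝ) : Set (E n) :=
  ⋂₀ {K | IsPseudoCone C K ∧ ∀ v ∈ Omega C, f v • v ∈ K}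

/-- Pseudo-conjugate of a function on a domain `D` of directions. -/
def pconj {n : ℕ} (D : Set (E n)) (f : E n → ℝ) (u : E n) : ℝ :=
  sSup ((fun v => 1 / (|(inner ℝ u v : ℝ)| * f v)) '' D)

/-- `u` is an outer normal vector of `K` at `x`. -/
def IsNormalAt {n : ℕ} (K : Set (E n)) (u x : E n) : Prop :=
  x ∈ K ∧ ∀ y ∈ K, (inner ℝ u (y - x) : ℝ) ≤ 0

section Aux

variable {n : ℕ}

lemma cone_smul_mem {C : Set (E n)} (hC : IsGoodCone C) {x : E n} (hx : x ∈ C)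
    {r : ℝ} (hr : 0 ≤ r) : r • x ∈ C := hC.2.2.1 x hx r hr

lemma cone_add_mem {C : Set (E n)} (hC : IsGoodCone C) {x y : E n} (hx : x ∈ C) (hy : y ∈ C) :
    x + y ∈ C := by
  have h := hC.2.1 hx hy (by norm_num : (0:ℝ) ≤ 1/2) (by norm_num : (0:ℝ) ≤ 1/2)
    (by norm_num : (1/2 : ℝ) + 1/2 = 1)
  have h2 : (2:ℝ) • ((1/2:ℝ) • x + (1/2:ℝ) • y) ∈ C := cone_smul_mem hC h (by norm_num)
  have he : (2:ℝ) • ((1/2:ℝ) • x + (1/2:ℝ) • y) = x + y := by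
    rw [smul_add, smul_smul, smul_smul]; norm_num
  rwa [he] at h2

lemma interior_smul_mem {C : Set (E n)} (hC : IsGoodCone C) {x : E n} (hx : x ∈ interior C)
    {r : ℝ} (hr : 0 < r) : r • x ∈ interior C := by
  rw [mem_interior_iff_mem_nhds, Metric.mem_nhds_iff] at hx ⊢
  obtain ⟨ε, hε, hball⟩ := hx
  refine ⟨r * ε, by positivity, fun z hz => ?_⟩
  have hz' : r⁻¹ • z ∈ ball x ε := by
    rw [mem_ball, dist_eq_norm] at hz ⊢
    have he : r⁻¹ • z - x = r⁻¹ • (z - r • x) := by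
      rw [smul_sub, smul_smul, inv_mul_cancel₀ hr.ne', one_smul]
    rw [he, norm_smul, Real.norm_eq_abs, abs_of_pos (inv_pos.mpr hr)]
    calc r⁻¹ * ‖z - r • x‖ < r⁻¹ * (r * ε) := by
          exact mul_lt_mul_of_pos_left hz (inv_pos.mpr hr)
      _ = ε := by field_simp
  have hmem : r • (r⁻¹ • z) ∈ C := cone_smul_mem hC (hball hz') hr.le
  rwa [smul_smul, mul_inv_cancel₀ hr.ne', one_smul] at hmem

lemma add_interior_mem {C : Set (E n)} (hC : IsGoodCone C) {x c : E n} (hx : x ∈ C)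
    (hc : c ∈ interior C) : x + c ∈ interior C := by
  rw [mem_interior_iff_mem_nhds, Metric.mem_nhds_iff] at hc ⊢
  obtain ⟨ε, hε, hball⟩ := hc
  refine ⟨ε, hε, fun z hz => ?_⟩
  have hzc : z - x ∈ ball c ε := by
    rw [mem_ball, dist_eq_norm] at hz ⊢
    have : z - x - c = z - (x + c) := by abel
    rwa [this]
  have := cone_add_mem hC hx (hball hzc)
  rwa [add_sub_cancel] at this

lemma radial_spec {C K : Set (E n)} (hC : IsGoodCone C) (hK : IsPseudoCone C K)
    {v : E n} (hv : v ∈ Omega C) :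
    0 < radial K v ∧ (radial K v) • v ∈ K ∧
      ∀ s : ℝ, 0 < s → s • v ∈ K → radial K v ≤ s := by
  obtain ⟨hKne, hKcl, _, hKC, hK0, hKadd⟩ := hK
  obtain ⟨hv1, hv2⟩ := hv
  -- δ : a radius around 0 disjoint from K
  have h0 : Kᶜ ∈ nhds (0 : E n) := hKcl.isOpen_compl.mem_nhds hK0
  obtain ⟨δ, hδ, hδball⟩ := Metric.mem_nhds_iff.mp h0
  set S := {r : ℝ | 0 < r ∧ r • v ∈ K} with hS
  -- S is nonempty
  obtain ⟨y0, hy0⟩ := hKne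
  have hSne : S.Nonempty := by
    rw [mem_interior_iff_mem_nhds, Metric.mem_nhds_iff] at hv2
    obtain ⟨ε, hε, hball⟩ := hv2
    set t : ℝ := ‖y0‖ / ε + 1 with ht
    have ht0 : 0 < t := by positivity
    have hmem : v - t⁻¹ • y0 ∈ ball v ε := by
      rw [mem_ball, dist_eq_norm]
      have : v - t⁻¹ • y0 - v = -(t⁻¹ • y0) := by abel
      rw [this, norm_neg, norm_smul, Real.norm_eq_abs, abs_of_pos (inv_pos.mpr ht0)]
      rw [inv_mul_lt_iff₀ ht0, ht]
      have : ‖y0‖ ≤ ε * (‖y0‖ / ε) := by field_simp; exact le_rfl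
      nlinarith
    have hC1 : t • (v - t⁻¹ • y0) ∈ C := cone_smul_mem hC (hball hmem) ht0.le
    have he : t • (v - t⁻¹ • y0) = t • v - y0 := by
      rw [smul_sub, smul_smul, mul_inv_cancel₀ ht0.ne', one_smul]
    rw [he] at hC1
    have : y0 + (t • v - y0) ∈ K := by
      rw [← hKadd]; exact Set.add_mem_add hy0 hC1
    rw [add_sub_cancel] at this
    exact ⟨t, ht0, this⟩
  -- every element of S is ≥ δ
  have hlb : ∀ r ∈ S, δ ≤ r := by
    rintro r ⟨hr0, hrK⟩
    by_contra h
    push_neg at h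
    have : r • v ∈ ball (0 : E n) δ := by
      rw [mem_ball, dist_eq_norm, sub_zero, norm_smul, Real.norm_eq_abs,
        abs_of_pos hr0, hv1, mul_one]
      exact h
    exact (hδball this) hrK
  have hbdd : BddBelow S := ⟨δ, hlb⟩
  -- S equals a closed set
  have hSeq : S = Set.Ici δ ∩ {r : ℝ | r • v ∈ K} := by
    ext r
    constructor
    · intro hr; exact ⟨hlb r hr, hr.2⟩
    · rintro ⟨h1, h2⟩; exact ⟨lt_of_lt_of_le hδ h1, h2⟩
  have hScl : IsClosed S := by
    rw [hSeq]
    exact isClosed_Ici.inter (hKcl.preimage (continuous_id.smul continuous_const))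
  have hmem : radial K v ∈ S := by
    rw [radial, ← hS]
    exact hScl.csInf_mem hSne hbdd
  exact ⟨hmem.1, hmem.2, fun s hs hsK => csInf_le hbdd ⟨hs, hsK⟩⟩

lemma inner_neg_of_interior_dual {C : Set (E n)} {u v : E n}
    (hu : u ∈ interior (dualCone C)) (hv : v ∈ C) (hvne : v ≠ 0) :
    (inner ℝ u v : ℝ) < 0 := by
  have hud : u ∈ dualCone C := interior_subset hu
  rcases lt_or_eq_of_le (hud v hv) with h | h
  · exact h
  · exfalso
    rw [mem_interior_iff_mem_nhds, Metric.mem_nhds_iff] at hu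
    obtain ⟨ε, hε, hball⟩ := hu
    have hvn : 0 < ‖v‖ := norm_pos_iff.mpr hvne
    set δ : ℝ := ε / (2 * ‖v‖) with hδdef
    have hδ : 0 < δ := by positivity
    have hmem : u + δ • v ∈ dualCone C := by
      apply hball
      rw [mem_ball, dist_eq_norm]
      have : u + δ • v - u = δ • v := by abel
      rw [this, norm_smul, Real.norm_eq_abs, abs_of_pos hδ, hδdef]
      rw [div_mul_eq_mul_div, mul_comm]
      rw [div_lt_iff₀ (by positivity)]
      nlinarith
    have h2 := hmem v hv
    rw [inner_add_left, real_inner_smul_left, real_inner_self_eq_norm_sq, h] at h2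
    have hn2 : 0 < ‖v‖ ^ 2 := by positivity
    nlinarith

end Aux

theorem stmt3 {n : ℕ} (C K : Set (E n)) (hC : IsGoodCone C) (hK : IsPseudoCone C K)
    (u : E n) (hu : u ∈ Omega (dualCone C)) :
    suppFn K u = sSup ((fun v => (inner ℝ u v : ℝ) * radial K v) '' Omega C) := by
  obtain ⟨hKne, hKcl, hKconv, hKC, hK0, hKadd⟩ := hK
  have hK' : IsPseudoCone C K := ⟨hKne, hKcl, hKconv, hKC, hK0, hKadd⟩
  obtain ⟨hu1, hu2⟩ := hu
  have huD : u ∈ dualCone C := interior_subset hu2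
  -- a unit vector in the interior of C
  obtain ⟨c, hc⟩ := hC.2.2.2.2
  have hcne : c ≠ 0 := by
    rintro rfl
    obtain ⟨y0, hy0⟩ := hKne
    have hy0ne : y0 ≠ 0 := fun h => hK0 (h ▸ hy0)
    have hy0C : y0 ∈ C := hKC hy0
    rw [mem_interior_iff_mem_nhds, Metric.mem_nhds_iff] at hc
    obtain ⟨ε, hε, hball⟩ := hc
    have hyn : 0 < ‖y0‖ := norm_pos_iff.mpr hy0ne
    have h1 : (ε / (2 * ‖y0‖)) • (-y0) ∈ C := by
      apply hball
      rw [mem_ball, dist_eq_norm, sub_zero, norm_smul, Real.norm_eq_abs,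
        abs_of_pos (by positivity : (0:ℝ) < ε / (2 * ‖y0‖)), norm_neg]
      rw [div_mul_eq_mul_div, mul_comm, div_lt_iff₀ (by positivity)]
      nlinarith
    have h2 : ((2 * ‖y0‖) / ε) • ((ε / (2 * ‖y0‖)) • (-y0)) ∈ C :=
      cone_smul_mem hC h1 (by positivity)
    rw [smul_smul, div_mul_div_comm, mul_comm ε] at h2
    rw [div_self (by positivity), one_smul] at h2
    exact hy0ne (hC.2.2.2.1 y0 hy0C h2)
  have hcn : 0 < ‖c‖ := norm_pos_iff.mpr hcne
  set c1 : E n := ‖c‖⁻¹ • c with hc1def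
  have hc1i : c1 ∈ interior C := interior_smul_mem hC hc (by positivity)
  have hc1n : ‖c1‖ = 1 := by
    rw [hc1def, norm_smul, Real.norm_eq_abs, abs_of_pos (by positivity)]
    field_simp
  have hc1Ω : c1 ∈ Omega C := ⟨hc1n, hc1i⟩
  set A := (fun y => (inner ℝ u y : ℝ)) '' K with hA
  set B := (fun v => (inner ℝ u v : ℝ) * radial K v) '' Omega C with hB
  have hBA : B ⊆ A := by
    rintro _ ⟨v, hv, rfl⟩
    obtain ⟨hρ, hρK, _⟩ := radial_spec hC hK' hv
    refine ⟨radial K v • v, hρK, ?_⟩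
    show (inner ℝ u (radial K v • v) : ℝ) = (inner ℝ u v : ℝ) * radial K v
    rw [real_inner_smul_right]; ring
  have hAbdd : BddAbove A := by
    refine ⟨0, ?_⟩
    rintro _ ⟨y, hy, rfl⟩
    exact huD y (hKC hy)
  have hAne : A.Nonempty := hKne.image _
  have hBne : B.Nonempty := ⟨_, ⟨c1, hc1Ω, rfl⟩⟩
  have hBbdd : BddAbove B := hAbdd.mono hBA
  show sSup A = sSup B
  apply le_antisymm
  · apply csSup_le hAne
    rintro _ ⟨y, hy, rfl⟩
    have hq : (inner ℝ u c1 : ℝ) < 0 :=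
      inner_neg_of_interior_dual hu2 (interior_subset hc1i)
        (fun h => by rw [h, norm_zero] at hc1n; norm_num at hc1n)
    apply le_of_forall_pos_le_add
    intro ε hε
    set t : ℝ := ε / (-(inner ℝ u c1 : ℝ)) with htdef
    have ht : 0 < t := div_pos hε (neg_pos.mpr hq)
    set y' : E n := y + t • c1 with hy'def
    have hy'K : y' ∈ K := by
      rw [hy'def, ← hKadd]
      exact Set.add_mem_add hy (cone_smul_mem hC (interior_subset hc1i) ht.le)
    have hy'i : y' ∈ interior C :=
      add_interior_mem hC (hKC hy) (interior_smul_mem hC hc1i ht)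
    have hy'ne : y' ≠ 0 := fun h => hK0 (h ▸ hy'K)
    have hny' : 0 < ‖y'‖ := norm_pos_iff.mpr hy'ne
    set v' : E n := ‖y'‖⁻¹ • y' with hv'def
    have hv'n : ‖v'‖ = 1 := by
      rw [hv'def, norm_smul, Real.norm_eq_abs, abs_of_pos (by positivity)]
      field_simp
    have hv'Ω : v' ∈ Omega C := ⟨hv'n, interior_smul_mem hC hy'i (by positivity)⟩
    have hsm : ‖y'‖ • v' = y' := by
      rw [hv'def, smul_smul, mul_inv_cancel₀ hny'.ne', one_smul]
    obtain ⟨hρpos, hρK, hρmin⟩ := radial_spec hC hK' hv'Ω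
    have hrad : radial K v' ≤ ‖y'‖ := hρmin ‖y'‖ hny' (by rw [hsm]; exact hy'K)
    have huv' : (inner ℝ u v' : ℝ) ≤ 0 := huD v' (interior_subset hv'Ω.2)
    have key : (inner ℝ u y' : ℝ) ≤ (inner ℝ u v' : ℝ) * radial K v' := by
      have he : (inner ℝ u y' : ℝ) = (inner ℝ u v' : ℝ) * ‖y'‖ := by
        rw [hv'def, real_inner_smul_right]
        field_simp
      rw [he]
      exact mul_le_mul_of_nonpos_left hrad huv'
    have h1 : (inner ℝ u y' : ℝ) ≤ sSup B :=
      key.trans (le_csSup hBbdd ⟨v', hv'Ω, rfl⟩)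
    have h2 : (inner ℝ u y' : ℝ) = (inner ℝ u y : ℝ) + t * (inner ℝ u c1 : ℝ) := by
      rw [hy'def, inner_add_right, real_inner_smul_right]
    have h3 : t * (inner ℝ u c1 : ℝ) = -ε := by
      rw [htdef, div_mul_eq_mul_div, div_neg, mul_div_assoc, div_self hq.ne, mul_one]
    linarith
  · exact csSup_le_csSup hAbdd hBne hBA
end
end

section
/- For every C-pseudo-cone K, the double copolar satisfies K** = K, where K* = {x : ⟨x,y⟩ ≤ −1 for all y ∈ K}. -/
open Set Metric Pointwise

noncomputable section

/-- Strict separation of a point from a closed convex set, in inner-product form. -/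
lemma sep_point_closed {n : ℕ} {K : Set (E n)} (hcl : IsClosed K) (hcv : Convex ℝ K)
    {z : E n} (hz : z ∉ K) :
    ∃ (u : E n) (c : ℝ), (inner ℝ u z : ℝ) < c ∧ ∀ y ∈ K, c < (inner ℝ u y : ℝ) := by
  obtain ⟨f, c, hfz, hfy⟩ := geometric_hahn_banach_point_closed hcv hcl hz
  refine ⟨(InnerProductSpace.toDual ℝ (E n)).symm f, c, ?_, fun y hy => ?_⟩
  · rw [InnerProductSpace.toDual_symm_apply]; exact hfz
  · rw [InnerProductSpace.toDual_symm_apply]; exact hfy y hy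

theorem stmt6 {n : ℕ} (C K : Set (E n)) (hC : IsGoodCone C) (hK : IsPseudoCone C K) :
    copolar (copolar K) = K := by
  obtain ⟨hKne, hKcl, hKcv, hKC, hK0, hKplus⟩ := hK
  obtain ⟨-, -, hCcone, -, -⟩ := hC
  -- every separating functional is nonnegative on K
  have key : ∀ (u : E n) (c : ℝ), (∀ y ∈ K, c < (inner ℝ u y : ℝ)) →
      ∀ y ∈ K, (0 : ℝ) ≤ inner ℝ u y := by
    intro u c hu y hy
    by_contra h
    push_neg at h
    set a : ℝ := inner ℝ u y with ha
    have ht : (0 : ℝ) ≤ max 0 (c / a - 1) := le_max_left _ _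
    have hmem : (1 + max 0 (c / a - 1)) • y ∈ K := by
      have : y + (max 0 (c / a - 1)) • y ∈ K := by
        rw [← hKplus]
        exact Set.add_mem_add hy (hCcone y (hKC hy) _ ht)
      rwa [add_smul, one_smul]
    have := hu _ hmem
    rw [real_inner_smul_right] at this
    rw [← ha] at this
    have h1 : c / a ≤ 1 + max 0 (c / a - 1) := by linarith [le_max_right 0 (c / a - 1)]
    have h2 : (1 + max 0 (c / a - 1)) * a ≤ (c / a) * a :=
      mul_le_mul_of_nonpos_right h1 h.le
    rw [div_mul_cancel₀ _ (ne_of_lt h)] at h2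
    linarith
  -- an element of the copolar of K (separating 0 from K)
  obtain ⟨w, d, hw0, hwy⟩ := sep_point_closed hKcl hKcv hK0
  rw [inner_zero_right] at hw0
  have hx₀ : (-(d⁻¹ • w)) ∈ copolar K := by
    intro y hy
    have := hwy y hy
    rw [inner_neg_left, real_inner_smul_left]
    rw [neg_le, neg_neg]
    rw [le_inv_mul_iff₀ hw0, mul_one]
    exact this.le
  ext z
  constructor
  · intro hz
    by_contra hzK
    obtain ⟨u, c, huz, huy⟩ := sep_point_closed hKcl hKcv hzK
    have hpos := key u c huy
    rcases lt_or_ge 0 c with hc | hc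
    · -- c > 0 : -c⁻¹ • u ∈ copolar K
      have hx : (-(c⁻¹ • u)) ∈ copolar K := by
        intro y hy
        have := huy y hy
        rw [inner_neg_left, real_inner_smul_left, neg_le, neg_neg,
          le_inv_mul_iff₀ hc, mul_one]
        exact this.le
      have := hz _ hx
      rw [inner_neg_right, real_inner_smul_right, real_inner_comm] at this
      nlinarith [this, huz, hc, inv_pos.mpr hc, mul_inv_cancel₀ (ne_of_gt hc)]
    · -- c ≤ 0, so ⟪u,z⟫ < 0
      have huzneg : (inner ℝ u z : ℝ) < 0 := lt_of_lt_of_le huz hc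
      set b : ℝ := inner ℝ z (-(d⁻¹ • w)) with hb
      set t : ℝ := max 0 (b / (inner ℝ u z : ℝ)) with htdef
      have ht0 : 0 ≤ t := le_max_left _ _
      have hxt : (-(d⁻¹ • w)) - t • u ∈ copolar K := by
        intro y hy
        have h1 := hx₀ y hy
        have h2 := hpos y hy
        rw [inner_sub_left, real_inner_smul_left]
        nlinarith [h1, h2, ht0]
      have hzle := hz _ hxt
      rw [inner_sub_right, real_inner_smul_right, ← hb, real_inner_comm u z] at hzle
      -- hzle : b - t * ⟪u,z⟫ ≤ -1, but b - t*⟪u,z⟫ ≥ 0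
      have : -(t * (inner ℝ u z : ℝ)) ≥ -b := by
        rcases le_or_gt 0 (b / (inner ℝ u z : ℝ)) with h | h
        · have ht : t = b / (inner ℝ u z : ℝ) := max_eq_right h
          rw [ht, div_mul_cancel₀ _ (ne_of_lt huzneg)]
        · have ht : t = 0 := max_eq_left h.le
          have hbpos : 0 < b := by
            rcases lt_trichotomy b 0 with hb' | hb' | hb'
            · exfalso
              have : 0 < b / (inner ℝ u z : ℝ) := div_pos_of_neg_of_neg hb' huzneg
              linarith
            · exfalso; rw [hb'] at h; simp at h
            · exact hb'
          rw [ht]; simp; linarith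
      linarith
  · intro hzK x hx
    rw [real_inner_comm]
    exact hx z hzK
end
end

section
/- For a C-pseudo-cone K and v ∈ Ω_C, the radial function satisfies ρ_K(v) = 1/(−h_{K*}(v)) = 1 / inf_{u ∈ Ω_{C°}} |⟨u,v⟩| ρ_{K*}(u). -/
open Set Metric Pointwise

noncomputable section

open RealInnerProductSpace

section Aux

variable {n : ℕ}

lemma exists_riesz (f : (E n) →L[ℝ] ℝ) : ∃ w : E n, ∀ x, ⟪w, x⟫ = f x :=
  ⟨(InnerProductSpace.toDual ℝ (E n)).symm f, fun _ => InnerProductSpace.toDual_symm_apply⟩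

lemma radial_spec_s7 {K : Set (E n)} (hcl : IsClosed K) {v : E n}
    (hne : ∃ r : ℝ, 0 < r ∧ r • v ∈ K)
    {ε : ℝ} (hε : 0 < ε) (hbd : ∀ r : ℝ, 0 < r → r • v ∈ K → ε ≤ r) :
    0 < radial K v ∧ radial K v • v ∈ K ∧ ∀ r : ℝ, 0 < r → r • v ∈ K → radial K v ≤ r := by
  have hset : {r : ℝ | 0 < r ∧ r • v ∈ K} = {r : ℝ | ε ≤ r ∧ r • v ∈ K} := by
    ext r
    exact ⟨fun h => ⟨hbd r h.1 h.2, h.2⟩, fun h => ⟨lt_of_lt_of_le hε h.1, h.2⟩⟩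
  have hclosed : IsClosed {r : ℝ | ε ≤ r ∧ r • v ∈ K} := by
    have h2 : IsClosed {r : ℝ | r • v ∈ K} :=
      hcl.preimage (continuous_id.smul continuous_const)
    exact (isClosed_Ici (a := ε)).inter h2
  obtain ⟨r0, hr0⟩ := hne
  have hmem : radial K v ∈ {r : ℝ | ε ≤ r ∧ r • v ∈ K} := by
    have hrad : radial K v = sInf {r : ℝ | ε ≤ r ∧ r • v ∈ K} := by rw [radial, hset]
    rw [hrad]
    exact hclosed.csInf_mem ⟨r0, hset ▸ hr0⟩ ⟨ε, fun r hr => hr.1⟩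
  refine ⟨lt_of_lt_of_le hε hmem.1, hmem.2, fun r h1 h2 => ?_⟩
  exact csInf_le ⟨0, fun x hx => hx.1.le⟩ ⟨h1, h2⟩

lemma dist_zero' {C K : Set (E n)} (hK : IsPseudoCone C K) :
    ∃ ε : ℝ, 0 < ε ∧ ∀ y ∈ K, ε ≤ ‖y‖ := by
  have h : Kᶜ ∈ nhds (0 : E n) := hK.2.1.isOpen_compl.mem_nhds hK.2.2.2.2.1
  rw [Metric.mem_nhds_iff] at h
  obtain ⟨ε, hε, hb⟩ := h
  refine ⟨ε/2, half_pos hε, fun y hy => ?_⟩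
  by_contra hlt
  push_neg at hlt
  have : y ∈ ball (0 : E n) ε := by
    rw [mem_ball, dist_zero_right]; linarith
  exact hb this hy

lemma dualCone_convex (C : Set (E n)) : Convex ℝ (dualCone C) := by
  intro x hx y hy a b ha hb hab c hc
  have h1 := hx c hc
  have h2 := hy c hc
  show (inner ℝ (a • x + b • y) c : ℝ) ≤ 0
  rw [inner_add_left, real_inner_smul_left, real_inner_smul_left]
  nlinarith

lemma dualCone_smul {C : Set (E n)} {x : E n} (hx : x ∈ dualCone C) {a : ℝ} (ha : 0 ≤ a) :
    a • x ∈ dualCone C := fun c hc => by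
  rw [real_inner_smul_left]
  exact mul_nonpos_of_nonneg_of_nonpos ha (hx c hc)

lemma interior_dual_smul {C : Set (E n)} {x : E n} (hx : x ∈ interior (dualCone C))
    {a : ℝ} (ha : 0 < a) : a • x ∈ interior (dualCone C) := by
  rw [mem_interior_iff_mem_nhds, Metric.mem_nhds_iff] at hx
  obtain ⟨δ, hδ, hball⟩ := hx
  apply mem_interior.mpr
  refine ⟨ball (a • x) (a * δ), ?_, isOpen_ball, mem_ball_self (by positivity)⟩
  intro y hy
  have hmem : a⁻¹ • y ∈ ball x δ := by
    rw [mem_ball, dist_eq_norm] at hy ⊢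
    have h1 : a⁻¹ • y - x = a⁻¹ • (y - a • x) := by
      rw [smul_sub, smul_smul, inv_mul_cancel₀ ha.ne', one_smul]
    rw [h1, norm_smul, norm_inv, Real.norm_eq_abs, abs_of_pos ha]
    calc a⁻¹ * ‖y - a • x‖ < a⁻¹ * (a * δ) := by
          exact mul_lt_mul_of_pos_left hy (inv_pos.mpr ha)
      _ = δ := by field_simp
  have h2 := dualCone_smul (hball hmem) ha.le
  rwa [smul_smul, mul_inv_cancel₀ ha.ne', one_smul] at h2

lemma interior_dual_bound {C : Set (E n)} {u : E n} (hu : u ∈ interior (dualCone C)) :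
    ∃ δ : ℝ, 0 < δ ∧ ∀ y ∈ C, ⟪u, y⟫ ≤ -δ * ‖y‖ := by
  rw [mem_interior_iff_mem_nhds, Metric.mem_nhds_iff] at hu
  obtain ⟨δ, hδ, hball⟩ := hu
  refine ⟨δ/2, half_pos hδ, fun y hy => ?_⟩
  rcases eq_or_ne y 0 with rfl | hy0
  · simp
  · have hny : (0:ℝ) < ‖y‖ := norm_pos_iff.mpr hy0
    have he : u + (δ/2) • (‖y‖⁻¹ • y) ∈ dualCone C := by
      apply hball
      rw [mem_ball, dist_eq_norm]
      have : u + (δ/2) • (‖y‖⁻¹ • y) - u = (δ/2) • (‖y‖⁻¹ • y) := by abel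
      rw [this, norm_smul, norm_smul, norm_inv, norm_norm, Real.norm_eq_abs,
        abs_of_pos (half_pos hδ), inv_mul_cancel₀ hny.ne', mul_one]
      linarith
    have h2 := he y hy
    rw [inner_add_left, real_inner_smul_left, real_inner_smul_left,
      real_inner_self_eq_norm_sq] at h2
    have h3 : ‖y‖⁻¹ * ‖y‖^2 = ‖y‖ := by field_simp
    nlinarith

lemma interior_dual_strict {C : Set (E n)} {u : E n} (hu : u ∈ interior (dualCone C))
    {y : E n} (hy : y ∈ C) (hy0 : y ≠ 0) : ⟪u, y⟫ < 0 := by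
  obtain ⟨δ, hδ, hb⟩ := interior_dual_bound hu
  have := hb y hy
  have hny : (0:ℝ) < ‖y‖ := norm_pos_iff.mpr hy0
  nlinarith

lemma copolar_closed (K : Set (E n)) : IsClosed (copolar K) := by
  have h : copolar K = ⋂ y ∈ K, {x : E n | ⟪x, y⟫ ≤ -1} := by
    ext x; simp [copolar]
  rw [h]
  exact isClosed_biInter fun y _ =>
    isClosed_le (Continuous.inner continuous_id continuous_const) continuous_const

lemma sep_point {C K : Set (E n)} (hC : IsGoodCone C) (hK : IsPseudoCone C K) {p : E n}
    (hp : p ∉ K) :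
    ∃ w : E n, ∃ s : ℝ, (∀ y ∈ K, ⟪w, y⟫ < -s) ∧ -s < ⟪w, p⟫ ∧ ∀ c ∈ C, ⟪w, c⟫ ≤ 0 := by
  obtain ⟨f, u, hfp, hfK⟩ := geometric_hahn_banach_point_closed hK.2.2.1 hK.2.1 hp
  obtain ⟨w0, hw0⟩ := exists_riesz f
  refine ⟨-w0, u, fun y hy => ?_, ?_, fun c hc => ?_⟩
  · rw [inner_neg_left, hw0]; linarith [hfK y hy]
  · rw [inner_neg_left, hw0]; linarith
  · by_contra hpos
    push_neg at hpos
    obtain ⟨y0, hy0⟩ := hK.1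
    have hm : ∀ m : ℝ, 0 ≤ m → ⟪-w0, y0 + m • c⟫ < -u := by
      intro m hm0
      have hmem : y0 + m • c ∈ K := by
        have h1 : y0 + m • c ∈ K + C := Set.add_mem_add hy0 (hC.2.2.1 c hc m hm0)
        rwa [hK.2.2.2.2.2] at h1
      rw [inner_neg_left, hw0]
      linarith [hfK _ hmem]
    set b := ⟪-w0, c⟫ with hb
    set a := ⟪-w0, y0⟫ with ha
    have hbpos : 0 < b := hpos
    set m := max 0 ((-u - a)/b + 1) with hmdef
    have hm0 : 0 ≤ m := le_max_left _ _
    have key := hm m hm0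
    rw [inner_add_right, real_inner_smul_right, ← ha, ← hb] at key
    have hge : ((-u - a)/b + 1) * b ≤ m * b :=
      mul_le_mul_of_nonneg_right (le_max_right _ _) hbpos.le
    have heq : ((-u - a)/b + 1) * b = -u - a + b := by field_simp
    nlinarith

lemma mem_of_dual {C : Set (E n)} (hC : IsGoodCone C) {z : E n}
    (hz : ∀ w ∈ dualCone C, ⟪w, z⟫ ≤ 0) : z ∈ C := by
  by_contra hzC
  obtain ⟨f, u, hfz, hfC⟩ := geometric_hahn_banach_point_closed hC.2.1 hC.1 hzC
  obtain ⟨w0, hw0⟩ := exists_riesz f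
  obtain ⟨x0, hx0⟩ := hC.2.2.2.2
  have h0C : (0 : E n) ∈ C := by
    have := hC.2.2.1 x0 (interior_subset hx0) 0 le_rfl
    simpa using this
  have hu0 : u < 0 := by have := hfC 0 h0C; simpa using this
  have hfc : ∀ c ∈ C, 0 ≤ f c := by
    intro c hc
    by_contra hneg
    push_neg at hneg
    have hm : ∀ m : ℝ, 0 ≤ m → u < m * f c := by
      intro m hm0
      have := hfC (m • c) (hC.2.2.1 c hc m hm0)
      simpa [map_smul, smul_eq_mul] using this
    have hq : 0 ≤ (u - 1)/(f c) := by
      rw [div_nonneg_iff]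
      right
      exact ⟨by linarith, hneg.le⟩
    have := hm _ hq
    rw [div_mul_cancel₀ _ hneg.ne] at this
    linarith
  have hw : -w0 ∈ dualCone C := fun c hc => by
    rw [inner_neg_left, hw0]; linarith [hfc c hc]
  have hzw := hz _ hw
  rw [inner_neg_left, hw0] at hzw
  linarith

lemma exists_interior_dual {C : Set (E n)} (hC : IsGoodCone C) :
    ∃ u₀, u₀ ∈ interior (dualCone C) := by
  by_contra hempty
  push_neg at hempty
  have hne : ¬ (interior (dualCone C)).Nonempty := fun ⟨x, hx⟩ => hempty x hx
  rw [(dualCone_convex C).interior_nonempty_iff_affineSpan_eq_top] at hne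
  have h0 : (0 : E n) ∈ dualCone C := fun y _ => by simp
  have hspan : Submodule.span ℝ (dualCone C) ≠ ⊤ := by
    intro htop
    apply hne
    apply SetLike.coe_injective
    have hcoe : (affineSpan ℝ (dualCone C) : Set (E n)) = Submodule.span ℝ (dualCone C) := by
      rw [← affineSpan_insert_zero, Set.insert_eq_of_mem h0]
    rw [hcoe, htop]
    simp
  obtain ⟨z, hzmem, hz0⟩ : ∃ z, z ∈ (Submodule.span ℝ (dualCone C))ᗮ ∧ z ≠ 0 := by
    by_contra h
    push_neg at h
    have hbot : (Submodule.span ℝ (dualCone C))ᗮ = ⊥ :=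
      (Submodule.eq_bot_iff _).mpr fun x hx => h x hx
    exact hspan (Submodule.orthogonal_eq_bot_iff.mp hbot)
  have hperp : ∀ w ∈ dualCone C, ⟪w, z⟫ = 0 := fun w hw =>
    (Submodule.mem_orthogonal _ z).mp hzmem w (Submodule.subset_span hw)
  have hzC : z ∈ C := mem_of_dual hC fun w hw => (hperp w hw).le
  have hzC' : -z ∈ C := mem_of_dual hC fun w hw => by
    rw [inner_neg_right, hperp w hw]; simp
  exact hz0 (hC.2.2.2.1 z hzC hzC')

end Aux

set_option maxHeartbeats 2000000 in
theorem stmt7 {n : ℕ} (C K : Set (E n)) (hC : IsGoodCone C) (hK : IsPseudoCone C K)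
    (v : E n) (hv : v ∈ Omega C) :
    radial K v = 1 / (-(suppFn (copolar K) v)) ∧
    radial K v = 1 / sInf ((fun u => |(inner ℝ u v : ℝ)| * radial (copolar K) u) '' Omega (dualCone C)) := by
  obtain ⟨hv1, hvint⟩ := hv
  have hv1 : ‖v‖ = 1 := hv1
  have hvC : v ∈ C := interior_subset hvint
  have hv0 : v ≠ 0 := by
    intro h; rw [h, norm_zero] at hv1; exact one_ne_zero hv1.symm
  obtain ⟨ε, hε, hεK⟩ := dist_zero' hK
  obtain ⟨y0, hy0⟩ := hK.1
  -- the ray through v meets K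
  have hne : ∃ r : ℝ, 0 < r ∧ r • v ∈ K := by
    obtain ⟨δ, hδ, hball⟩ : ∃ δ > 0, ball v δ ⊆ C := by
      rw [mem_interior_iff_mem_nhds, Metric.mem_nhds_iff] at hvint
      exact hvint
    set r := ‖y0‖/δ + 1 with hr
    have hrpos : (0:ℝ) < r := by positivity
    refine ⟨r, hrpos, ?_⟩
    have h1 : v - r⁻¹ • y0 ∈ C := by
      apply hball
      rw [mem_ball, dist_eq_norm]
      have he : v - r⁻¹ • y0 - v = -(r⁻¹ • y0) := by abel
      rw [he, norm_neg, norm_smul, norm_inv, Real.norm_eq_abs, abs_of_pos hrpos]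
      rw [inv_mul_lt_iff₀ hrpos] -- ‖y0‖ < r * δ
      have : r * δ = ‖y0‖ + δ := by rw [hr]; field_simp
      rw [this]
      linarith
    have h2 : r • (v - r⁻¹ • y0) ∈ C := hC.2.2.1 _ h1 r hrpos.le
    have h3 : r • (v - r⁻¹ • y0) = r • v - y0 := by
      rw [smul_sub, smul_smul, mul_inv_cancel₀ hrpos.ne', one_smul]
    have h4 : y0 + (r • v - y0) ∈ K + C := Set.add_mem_add hy0 (h3 ▸ h2)
    rw [hK.2.2.2.2.2] at h4
    have h5 : y0 + (r • v - y0) = r • v := by abel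
    rwa [h5] at h4
  have hbd : ∀ r : ℝ, 0 < r → r • v ∈ K → ε ≤ r := by
    intro r hr hrv
    have := hεK _ hrv
    rwa [norm_smul, hv1, mul_one, Real.norm_eq_abs, abs_of_pos hr] at this
  obtain ⟨hρpos, hρmem, hρmin⟩ := radial_spec_s7 hK.2.1 hne hε hbd
  set ρ := radial K v with hρdef
  -- approximate support vectors
  have approx : ∀ t : ℝ, 0 < t → t < ρ → ∃ x ∈ copolar K, -1/t < ⟪v, x⟫ := by
    intro t ht htρ
    have hpt : t • v ∉ K := fun h => absurd (hρmin t ht h) (not_le.mpr htρ)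
    obtain ⟨w, s, hwK, hwp, hwC⟩ := sep_point hC hK hpt
    have hwv : ⟪w, v⟫ ≤ 0 := hwC v hvC
    rw [real_inner_smul_right] at hwp
    have hs : 0 < s := by nlinarith
    refine ⟨s⁻¹ • w, ?_, ?_⟩
    · intro y hy
      show (inner ℝ (s⁻¹ • w) y : ℝ) ≤ -1
      rw [real_inner_smul_left]
      have h1 := hwK y hy
      have h2 : s⁻¹ * ⟪w, y⟫ ≤ s⁻¹ * (-s) := by
        apply mul_le_mul_of_nonneg_left h1.le (inv_pos.mpr hs).le
      rwa [mul_neg, inv_mul_cancel₀ hs.ne'] at h2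
    · rw [real_inner_comm, real_inner_smul_left]
      have h1 : (-1)/t < ⟪w, v⟫/s := by
        rw [div_lt_div_iff₀ ht hs]
        nlinarith
      have h2 : ⟪w,v⟫/s = s⁻¹ * ⟪w,v⟫ := div_eq_inv_mul _ _
      linarith
  -- upper bound for the support function on the copolar
  have hKstar_bdd : ∀ x ∈ copolar K, ⟪v, x⟫ ≤ -1/ρ := by
    intro x hx
    have h1 := hx _ hρmem
    rw [real_inner_smul_right] at h1
    rw [real_inner_comm]
    exact (le_div_iff₀ hρpos).mpr (by linarith)
  have hBdd : BddAbove ((fun y => (inner ℝ v y : ℝ)) '' copolar K) := by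
    refine ⟨-1/ρ, ?_⟩
    rintro _ ⟨x, hx, rfl⟩
    exact hKstar_bdd x hx
  have hNe : ((fun y => (inner ℝ v y : ℝ)) '' copolar K).Nonempty := by
    obtain ⟨x, hx, _⟩ := approx (ρ/2) (by positivity) (by linarith)
    exact ⟨_, ⟨x, hx, rfl⟩⟩
  have hsup_le : suppFn (copolar K) v ≤ -1/ρ := by
    apply csSup_le hNe
    rintro _ ⟨x, hx, rfl⟩
    exact hKstar_bdd x hx
  have hle_sup : -1/ρ ≤ suppFn (copolar K) v := by
    refine le_of_forall_lt fun c hc => ?_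
    have hneg : -1/ρ < 0 := div_neg_of_neg_of_pos (by norm_num) hρpos
    have hc0 : c < 0 := lt_trans hc hneg
    have hcρ : c * ρ < -1 := by
      have h := mul_lt_mul_of_pos_right hc hρpos
      have he : (-1/ρ) * ρ = -1 := by field_simp
      rwa [he] at h
    set t := -c⁻¹ with htdef
    have ht : 0 < t := neg_pos.mpr (inv_lt_zero.mpr hc0)
    have key : (-c) * t = 1 := by
      rw [htdef, neg_mul_neg]
      exact mul_inv_cancel₀ hc0.ne
    have htρ : t < ρ := by
      by_contra hcon
      push_neg at hcon
      have h3 : (-c)*ρ ≤ (-c)*t := mul_le_mul_of_nonneg_left hcon (by linarith)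
      rw [key] at h3
      nlinarith
    obtain ⟨x, hx, hgt⟩ := approx t ht htρ
    have hct : -1/t = c := by
      rw [htdef]
      field_simp
    have hle : ⟪v, x⟫ ≤ suppFn (copolar K) v := le_csSup hBdd ⟨x, hx, rfl⟩
    rw [hct] at hgt
    linarith
  have hsup : suppFn (copolar K) v = -1/ρ := le_antisymm hsup_le hle_sup
  -- part 2 setup
  obtain ⟨u₀, hu₀⟩ := exists_interior_dual hC
  have hu₀v : ⟪u₀, v⟫ < 0 := interior_dual_strict hu₀ hvC hv0
  have hu₀0 : u₀ ≠ 0 := by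
    intro h; rw [h, inner_zero_left] at hu₀v; exact lt_irrefl 0 hu₀v
  have hu₀n : (0:ℝ) < ‖u₀‖ := norm_pos_iff.mpr hu₀0
  have hu₀Ω : ‖u₀‖⁻¹ • u₀ ∈ Omega (dualCone C) := by
    constructor
    · show ‖‖u₀‖⁻¹ • u₀‖ = 1
      rw [norm_smul, norm_inv, norm_norm, inv_mul_cancel₀ hu₀n.ne']
    · exact interior_dual_smul hu₀ (inv_pos.mpr hu₀n)
  set T := (fun u => |(inner ℝ u v : ℝ)| * radial (copolar K) u) '' Omega (dualCone C) with hTdef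
  have hTne : T.Nonempty := ⟨_, ⟨_, hu₀Ω, rfl⟩⟩
  have hstar : ∀ u ∈ Omega (dualCone C),
      0 < radial (copolar K) u ∧ radial (copolar K) u • u ∈ copolar K ∧
        ∀ r : ℝ, 0 < r → r • u ∈ copolar K → radial (copolar K) u ≤ r := by
    intro u hu
    obtain ⟨δu, hδu, hδub⟩ := interior_dual_bound hu.2
    have hbKu : ∀ y ∈ K, ⟪u, y⟫ ≤ -(δu*ε) := by
      intro y hy
      have h1 := hδub y (hK.2.2.2.1 hy)
      have h2 := hεK y hy
      nlinarith
    have huy0 : ⟪u, y0⟫ < 0 := lt_of_le_of_lt (hbKu y0 hy0) (by nlinarith)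
    have hδε : (0:ℝ) < δu * ε := by positivity
    have hneu : ∃ r : ℝ, 0 < r ∧ r • u ∈ copolar K := by
      refine ⟨(δu*ε)⁻¹, by positivity, fun y hy => ?_⟩
      show (inner ℝ ((δu*ε)⁻¹ • u) y : ℝ) ≤ -1
      rw [real_inner_smul_left]
      have h1 := hbKu y hy
      have h2 : (δu*ε)⁻¹ * ⟪u,y⟫ ≤ (δu*ε)⁻¹ * (-(δu*ε)) :=
        mul_le_mul_of_nonneg_left h1 (inv_pos.mpr hδε).le
      rwa [mul_neg, inv_mul_cancel₀ hδε.ne'] at h2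
    have hna : (0:ℝ) < -⟪u,y0⟫ := neg_pos.mpr huy0
    refine radial_spec_s7 (copolar_closed K) hneu (ε := (-⟪u,y0⟫)⁻¹) (inv_pos.mpr hna) ?_
    intro r hr hru
    have h1 := hru y0 hy0
    rw [real_inner_smul_left] at h1
    rw [inv_eq_one_div, div_le_iff₀ hna]
    nlinarith
  have hlow : ∀ x ∈ T, 1/ρ ≤ x := by
    rintro _ ⟨u, hu, rfl⟩
    obtain ⟨hru, hruK, _⟩ := hstar u hu
    have huv : ⟪u, v⟫ < 0 := interior_dual_strict hu.2 hvC hv0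
    have h1 := hruK _ hρmem
    rw [real_inner_smul_left, real_inner_smul_right] at h1
    show 1/ρ ≤ |(inner ℝ u v : ℝ)| * radial (copolar K) u
    rw [abs_of_neg huv, div_le_iff₀ hρpos]
    nlinarith
  have hupper : sInf T ≤ 1/ρ := by
    apply le_of_forall_pos_le_add
    intro ε' hε'
    have hrec : (0:ℝ) < 1/ρ + ε'/2 := by positivity
    set t := (1/ρ + ε'/2)⁻¹ with htdef
    have ht : 0 < t := by positivity
    have h1t : 1/t = 1/ρ + ε'/2 := by rw [htdef, one_div, inv_inv]
    have htρ : t < ρ := by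
      have h1 : ρ⁻¹ < 1/ρ + ε'/2 := by rw [← one_div]; linarith
      have h2 := inv_strictAnti₀ (inv_pos.mpr hρpos) h1
      rwa [inv_inv] at h2
    have hpt : t • v ∉ K := fun h => absurd (hρmin t ht h) (not_le.mpr htρ)
    obtain ⟨w, s, hwK, hwp, hwC⟩ := sep_point hC hK hpt
    rw [real_inner_smul_right] at hwp
    have hwv : ⟪w, v⟫ ≤ 0 := hwC v hvC
    have hs : 0 < s := by nlinarith
    have hwdual : w ∈ dualCone C := fun c hc => hwC c hc
    set c0 := -⟪u₀, v⟫ with hc0def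
    have hc0 : 0 < c0 := neg_pos.mpr hu₀v
    set lam := min (1/2 : ℝ) (ε' * s / (4 * c0)) with hlamdef
    have hlam0 : 0 < lam := lt_min (by norm_num) (by positivity)
    have hlam1 : lam ≤ 1/2 := min_le_left _ _
    have hlam2 : lam ≤ ε' * s / (4 * c0) := min_le_right _ _
    have h1lam : (0:ℝ) < 1 - lam := by linarith
    set ul := lam • u₀ + (1 - lam) • w with huldef
    have hulint : ul ∈ interior (dualCone C) :=
      (dualCone_convex C).combo_interior_closure_mem_interior hu₀
        (subset_closure hwdual) hlam0 h1lam.le (by ring)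
    have hulK : ∀ y ∈ K, ⟪ul, y⟫ ≤ -((1-lam)*s) := by
      intro y hy
      rw [huldef, inner_add_left, real_inner_smul_left, real_inner_smul_left]
      have h1 := hwK y hy
      have h2 : ⟪u₀, y⟫ ≤ 0 := (interior_subset hu₀) y (hK.2.2.2.1 hy)
      nlinarith
    have hulv : -((1-lam)*(s/t) + lam*c0) ≤ ⟪ul, v⟫ := by
      rw [huldef, inner_add_left, real_inner_smul_left, real_inner_smul_left]
      have h1 : -(s/t) ≤ ⟪w, v⟫ := by
        rw [neg_le, le_div_iff₀ ht]
        nlinarith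
      have h2 : ⟪u₀, v⟫ = -c0 := by rw [hc0def]; ring
      nlinarith
    have hulv0 : ⟪ul, v⟫ < 0 := interior_dual_strict hulint hvC hv0
    have hul0 : ul ≠ 0 := by
      intro h; rw [h, inner_zero_left] at hulv0; exact lt_irrefl _ hulv0
    have huln : (0:ℝ) < ‖ul‖ := norm_pos_iff.mpr hul0
    set u := ‖ul‖⁻¹ • ul with hudef
    have huΩ : u ∈ Omega (dualCone C) := by
      constructor
      · show ‖u‖ = 1
        rw [hudef, norm_smul, norm_inv, norm_norm, inv_mul_cancel₀ huln.ne']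
      · exact interior_dual_smul hulint (inv_pos.mpr huln)
    obtain ⟨hrupos, _, hrumin⟩ := hstar u huΩ
    have hsl : (0:ℝ) < (1-lam)*s := by positivity
    have hruK : (‖ul‖ / ((1-lam)*s)) • u ∈ copolar K := by
      intro y hy
      show (inner ℝ ((‖ul‖ / ((1-lam)*s)) • u) y : ℝ) ≤ -1
      have heq : (‖ul‖ / ((1-lam)*s)) • u = ((1-lam)*s)⁻¹ • ul := by
        rw [hudef, smul_smul]
        congr 1
        field_simp
      rw [heq, real_inner_smul_left]
      have h1 := hulK y hy
      have h2 : ((1-lam)*s)⁻¹ * ⟪ul,y⟫ ≤ ((1-lam)*s)⁻¹ * (-((1-lam)*s)) :=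
        mul_le_mul_of_nonneg_left h1 (inv_pos.mpr hsl).le
      rwa [mul_neg, inv_mul_cancel₀ hsl.ne'] at h2
    have hrle : radial (copolar K) u ≤ ‖ul‖ / ((1-lam)*s) := hrumin _ (by positivity) hruK
    have habs : |(inner ℝ u v : ℝ)| = ‖ul‖⁻¹ * (-⟪ul,v⟫) := by
      rw [hudef, real_inner_smul_left, abs_mul, abs_of_pos (inv_pos.mpr huln),
        abs_of_neg hulv0]
    have hmemT : |(inner ℝ u v : ℝ)| * radial (copolar K) u ∈ T := ⟨u, huΩ, rfl⟩
    have hlc : lam * c0 ≤ ε' * s / 4 := by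
      have h := (le_div_iff₀ (by positivity : (0:ℝ) < 4*c0)).mp hlam2
      nlinarith
    have hbound : |(inner ℝ u v : ℝ)| * radial (copolar K) u ≤ 1/ρ + ε' := by
      have step1 : |(inner ℝ u v : ℝ)| * radial (copolar K) u
          ≤ |(inner ℝ u v : ℝ)| * (‖ul‖ / ((1-lam)*s)) :=
        mul_le_mul_of_nonneg_left hrle (abs_nonneg _)
      have step2 : |(inner ℝ u v : ℝ)| * (‖ul‖ / ((1-lam)*s)) = (-⟪ul,v⟫) / ((1-lam)*s) := by
        rw [habs]
        field_simp
      have step3 : (-⟪ul,v⟫) / ((1-lam)*s) ≤ ((1-lam)*(s/t) + lam*c0) / ((1-lam)*s) := by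
        gcongr
        linarith
      have step4 : ((1-lam)*(s/t) + lam*c0) / ((1-lam)*s) = 1/t + lam*c0/((1-lam)*s) := by
        field_simp
      have step5 : lam*c0/((1-lam)*s) ≤ ε'/2 := by
        rw [div_le_iff₀ hsl]
        nlinarith [mul_pos hε' hs]
      have := step1.trans (step2 ▸ (step3.trans_eq step4))
      rw [h1t] at this
      linarith
    calc sInf T ≤ |(inner ℝ u v : ℝ)| * radial (copolar K) u :=
          csInf_le ⟨1/ρ, fun x hx => hlow x hx⟩ hmemT
      _ ≤ 1/ρ + ε' := hbound
  have hinf : sInf T = 1/ρ := le_antisymm hupper (le_csInf hTne hlow)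
  constructor
  · rw [hsup, neg_div, neg_neg, one_div_one_div]
  · rw [hinf, one_div_one_div]
end
end

section
/- Let f : Ω_C → (0,∞) be bounded away from 0. Then the negated support function of its convexification satisfies −h_{⟨f⟩}(u) = inf_{v ∈ Ω_C} |⟨u,v⟩| f(v) for all u ∈ Ω_{C°}. -/
open Set Metric Pointwise

noncomputable section

theorem stmt10 {n : ℕ} (C : Set (E n)) (hC : IsGoodCone C) (f : E n → ℝ)
    (a : ℝ) (ha : 0 < a) (hf : ∀ v ∈ Omega C, a ≤ f v)
    (u : E n) (hu : u ∈ Omega (dualCone C)) :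
    -(suppFn (convexif C f) u) = sInf ((fun v => |(inner ℝ u v : ℝ)| * f v) '' Omega C) := by
  obtain ⟨hCcl, hCconv, hCcone, hCpt, x₀, hx₀⟩ := hC
  obtain ⟨hu1, huI⟩ := hu
  have huD : u ∈ dualCone C := interior_subset huI
  -- C is closed under addition
  have hadd : ∀ x ∈ C, ∀ y ∈ C, x + y ∈ C := by
    intro x hx y hy
    have h := hCconv hx hy (by norm_num : (0:ℝ) ≤ 1/2) (by norm_num : (0:ℝ) ≤ 1/2)
      (by norm_num)
    have h2 := hCcone _ h 2 (by norm_num)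
    have : (2:ℝ) • ((1/2:ℝ) • x + (1/2:ℝ) • y) = x + y := by
      rw [smul_add, smul_smul, smul_smul]; norm_num
    rwa [this] at h2
  have h0C : (0 : E n) ∈ C := by
    have := hCcone x₀ (interior_subset hx₀) 0 le_rfl
    rwa [zero_smul] at this
  -- the key coercivity: inner ℝ u v ≤ -(ε/2) on Omega C
  obtain ⟨ε, hε, hball⟩ := Metric.isOpen_iff.1 isOpen_interior u huI
  have hkey : ∀ v ∈ Omega C, (inner ℝ u v : ℝ) ≤ -(ε/2) := by
    intro v hv
    obtain ⟨hv1, hv2⟩ := hv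
    have hv1' : ‖v‖ = 1 := hv1
    have hvC : v ∈ C := interior_subset hv2
    have hw : u + (ε/2) • v ∈ dualCone C := by
      apply interior_subset
      apply hball
      rw [Metric.mem_ball, dist_eq_norm]
      have : u + (ε/2) • v - u = (ε/2) • v := by abel
      rw [this, norm_smul, hv1', mul_one, Real.norm_eq_abs, abs_of_pos (by linarith : (0:ℝ) < ε/2)]
      linarith
    have h1 := hw v hvC
    have h2 : (inner ℝ (u + (ε/2) • v) v : ℝ) = inner ℝ u v + (ε/2) * (‖v‖ : ℝ)^2 := by
      rw [inner_add_left, real_inner_smul_left, real_inner_self_eq_norm_sq]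
    rw [h2, hv1', one_pow, mul_one] at h1
    linarith
  -- Omega C is nonempty
  have hx0ne : x₀ ≠ 0 := by
    intro h0
    rw [h0] at hx₀
    obtain ⟨r, hr, hball0⟩ := Metric.isOpen_iff.1 isOpen_interior 0 hx₀
    have hmem : (r/2) • u ∈ C := by
      apply interior_subset
      apply hball0
      have hu1' : ‖u‖ = 1 := hu1
      rw [Metric.mem_ball, dist_eq_norm, sub_zero, norm_smul, hu1', mul_one,
        Real.norm_eq_abs, abs_of_pos (by linarith : (0:ℝ) < r/2)]
      linarith
    have hu1' : ‖u‖ = 1 := hu1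
    have := huD _ hmem
    rw [real_inner_smul_right, real_inner_self_eq_norm_sq, hu1', one_pow, mul_one] at this
    linarith
  set v₀ : E n := ‖x₀‖⁻¹ • x₀ with hv₀def
  have hx0norm : (0:ℝ) < ‖x₀‖ := norm_pos_iff.2 hx0ne
  have hv₀ : v₀ ∈ Omega C := by
    constructor
    · show ‖v₀‖ = 1
      rw [hv₀def, norm_smul, Real.norm_eq_abs, abs_of_pos (inv_pos.2 hx0norm)]
      field_simp
    · have h1 : v₀ ∈ ‖x₀‖⁻¹ • interior C := smul_mem_smul_set hx₀
      rw [← interior_smul₀ (by positivity : ‖x₀‖⁻¹ ≠ (0:ℝ))] at h1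
      refine interior_mono ?_ h1
      intro y hy
      obtain ⟨z, hz, rfl⟩ := hy
      exact hCcone z hz _ (by positivity)
  -- the set S and its infimum m
  set S : Set ℝ := (fun v => |(inner ℝ u v : ℝ)| * f v) '' Omega C with hSdef
  have hS_ne : S.Nonempty := ⟨_, mem_image_of_mem _ hv₀⟩
  have hS_lb : ∀ s ∈ S, ε/2 * a ≤ s := by
    rintro s ⟨v, hv, rfl⟩
    have h1 := hkey v hv
    have h2 : ε/2 ≤ |(inner ℝ u v : ℝ)| := by
      have := neg_le_abs (inner ℝ u v : ℝ)
      linarith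
    exact mul_le_mul h2 (hf v hv) ha.le (abs_nonneg _)
  have hBdd : BddBelow S := ⟨ε/2 * a, hS_lb⟩
  set m := sInf S with hmdef
  have hm_ge : ε/2 * a ≤ m := le_csInf hS_ne hS_lb
  have hm_pos : (0:ℝ) < m := lt_of_lt_of_le (by positivity) hm_ge
  -- values at the generating points
  have hval : ∀ v ∈ Omega C, (inner ℝ u (f v • v) : ℝ) = -(|(inner ℝ u v : ℝ)| * f v) := by
    intro v hv
    rw [real_inner_smul_right, abs_of_nonpos (le_trans (hkey v hv) (by linarith))]
    ring
  have hfpos : ∀ v ∈ Omega C, 0 < f v := fun v hv => lt_of_lt_of_le ha (hf v hv)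
  have hpC : ∀ v ∈ Omega C, f v • v ∈ C :=
    fun v hv => hCcone v (interior_subset hv.2) (f v) (hfpos v hv).le
  have hpK : ∀ v ∈ Omega C, (inner ℝ u (f v • v) : ℝ) ≤ -m := by
    intro v hv
    rw [hval v hv]
    have : m ≤ |(inner ℝ u v : ℝ)| * f v := csInf_le hBdd (mem_image_of_mem _ hv)
    linarith
  -- the half-space pseudo-cone
  set K : Set (E n) := C ∩ {y | (inner ℝ u y : ℝ) ≤ -m} with hKdef
  have hKpc : IsPseudoCone C K := by
    refine ⟨⟨f v₀ • v₀, hpC v₀ hv₀, hpK v₀ hv₀⟩, ?_, ?_, inter_subset_left, ?_, ?_⟩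
    · exact hCcl.inter (isClosed_le (Continuous.inner continuous_const continuous_id)
        continuous_const)
    · refine hCconv.inter ?_
      intro x hx y hy p q hp hq hpq
      simp only [mem_setOf_eq] at hx hy ⊢
      rw [inner_add_right, real_inner_smul_right, real_inner_smul_right]
      nlinarith
    · intro h
      have := h.2
      simp only [mem_setOf_eq, inner_zero_right] at this
      linarith
    · apply Set.Subset.antisymm
      · rintro z hz
        rw [Set.mem_add] at hz
        obtain ⟨x, hx, y, hy, rfl⟩ := hz
        refine ⟨hadd x hx.1 y hy, ?_⟩
        simp only [mem_setOf_eq]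
        rw [inner_add_right]
        have := huD y hy
        have := hx.2
        simp only [mem_setOf_eq] at this
        linarith
      · intro k hk
        rw [Set.mem_add]
        exact ⟨k, hk, 0, h0C, add_zero k⟩
  have hKmem : K ∈ {K | IsPseudoCone C K ∧ ∀ v ∈ Omega C, f v • v ∈ K} :=
    ⟨hKpc, fun v hv => ⟨hpC v hv, hpK v hv⟩⟩
  have hsub : convexif C f ⊆ K := sInter_subset_of_mem hKmem
  have hmemcv : ∀ v ∈ Omega C, f v • v ∈ convexif C f := by
    intro v hv
    rw [convexif, mem_sInter]
    exact fun T hT => hT.2 v hv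
  -- the image set T
  set T : Set ℝ := (fun y => (inner ℝ u y : ℝ)) '' convexif C f with hTdef
  have hT_ne : T.Nonempty := ⟨_, mem_image_of_mem _ (hmemcv v₀ hv₀)⟩
  have hT_ub : ∀ t ∈ T, t ≤ -m := by
    rintro t ⟨y, hy, rfl⟩
    exact (hsub hy).2
  have hT_bdd : BddAbove T := ⟨-m, hT_ub⟩
  have h1 : sSup T ≤ -m := csSup_le hT_ne hT_ub
  have h3 : -(sSup T) ≤ m := by
    apply le_csInf hS_ne
    rintro s ⟨v, hv, rfl⟩
    have h2 : (inner ℝ u (f v • v) : ℝ) ≤ sSup T :=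
      le_csSup hT_bdd (mem_image_of_mem _ (hmemcv v hv))
    rw [hval v hv] at h2
    show -(sSup T) ≤ |(inner ℝ u v : ℝ)| * f v
    linarith
  show -(sSup T) = m
  linarith
end
end

section
/- Let f : Ω_C → (0,∞) be bounded away from 0. Then for each u ∈ Ω_{C°}, the pseudo-conjugate f*(u) := sup_{v ∈ Ω_C} 1/(|⟨u,v⟩| f(v)) is finite, and f* : Ω_{C°} → (0,∞) is bounded away from 0. -/
open Set Metric Pointwise

noncomputable section

theorem stmt11 {n : ℕ} (C : Set (E n)) (hC : IsGoodCone C) (f : E n → ℝ)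
    (a : ℝ) (ha : 0 < a) (hf : ∀ v ∈ Omega C, a ≤ f v) :
    (∀ u ∈ Omega (dualCone C), BddAbove ((fun v => 1 / (|(inner ℝ u v : ℝ)| * f v)) '' Omega C)) ∧
    (∃ b > (0:ℝ), ∀ u ∈ Omega (dualCone C), b ≤ pconj (Omega C) f u) := by
  have key : ∀ u ∈ Omega (dualCone C), ∃ ε > (0:ℝ), ∀ v ∈ Omega C, (inner ℝ u v : ℝ) ≤ -ε := by
    rintro u ⟨hu1, hu2⟩
    obtain ⟨ε, hε, hball⟩ := Metric.mem_nhds_iff.mp (mem_interior_iff_mem_nhds.mp hu2)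
    refine ⟨ε/2, by linarith, ?_⟩
    rintro v ⟨hv1', hv2⟩
    have hv1 : ‖v‖ = 1 := hv1'
    have hvC : v ∈ C := interior_subset hv2
    have hmem : u + (ε/2) • v ∈ dualCone C := by
      apply hball
      simp only [Metric.mem_ball, dist_eq_norm, add_sub_cancel_left, norm_smul,
        Real.norm_eq_abs, hv1, mul_one]
      rw [abs_of_pos (by linarith)]
      linarith
    have h := hmem v hvC
    rw [inner_add_left, real_inner_smul_left, real_inner_self_eq_norm_sq, hv1] at h
    linarith
  have bdd : ∀ u ∈ Omega (dualCone C),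
      BddAbove ((fun v => 1 / (|(inner ℝ u v : ℝ)| * f v)) '' Omega C) := by
    intro u hu
    obtain ⟨ε, hε, hkey⟩ := key u hu
    refine ⟨1/(ε*a), ?_⟩
    rintro x ⟨v, hv, rfl⟩
    have h0 := hkey v hv
    have h1 : ε ≤ |(inner ℝ u v : ℝ)| := by
      rw [abs_of_nonpos (by linarith)]; linarith
    have h2 : a ≤ f v := hf v hv
    have h3 : ε*a ≤ |(inner ℝ u v : ℝ)| * f v := mul_le_mul h1 h2 ha.le (abs_nonneg _)
    exact one_div_le_one_div_of_le (by positivity) h3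
  refine ⟨bdd, ?_⟩
  by_cases hne : (Omega (dualCone C)).Nonempty
  · obtain ⟨u0, hu0⟩ := hne
    obtain ⟨x, hx⟩ := hC.2.2.2.2
    have hx0 : x ≠ 0 := by
      rintro rfl
      obtain ⟨δ, hδ, hball⟩ := Metric.mem_nhds_iff.mp (mem_interior_iff_mem_nhds.mp hx)
      have hu0n : ‖u0‖ = 1 := hu0.1
      have hmemball : ∀ c : ℝ, |c| < δ → c • u0 ∈ C := by
        intro c hc
        apply hball
        simp [Metric.mem_ball, dist_eq_norm, norm_smul, hu0n, hc]
      have h1 : (δ/2) • u0 ∈ C := hmemball _ (by rw [abs_of_pos (by linarith)]; linarith)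
      have h2 : -((δ/2) • u0) ∈ C := by
        rw [← neg_smul]
        exact hmemball _ (by rw [abs_neg, abs_of_pos (by linarith)]; linarith)
      have h3 := hC.2.2.2.1 _ h1 h2
      have h4 : (δ/2 : ℝ) ≠ 0 := by positivity
      have := smul_eq_zero.mp h3
      rcases this with h | h
      · exact h4 h
      · rw [h, norm_zero] at hu0n; norm_num at hu0n
    have hnx : (0:ℝ) < ‖x‖ := norm_pos_iff.mpr hx0
    set v0 : E n := ‖x‖⁻¹ • x with hv0def
    have hv0 : v0 ∈ Omega C := by
      constructor
      · simp [hv0def, norm_smul, abs_of_pos (inv_pos.mpr hnx)]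
        field_simp
      · have hsub : ‖x‖⁻¹ • C ⊆ C := by
          rintro y ⟨z, hz, rfl⟩
          exact hC.2.2.1 z hz _ (by positivity)
        have : v0 ∈ interior (‖x‖⁻¹ • C) := by
          rw [interior_smul₀ (by positivity : (‖x‖⁻¹ : ℝ) ≠ 0)]
          exact ⟨x, hx, rfl⟩
        exact interior_mono hsub this
    have hfv0 : (0:ℝ) < f v0 := lt_of_lt_of_le ha (hf v0 hv0)
    refine ⟨1 / f v0, by positivity, ?_⟩
    intro u hu
    obtain ⟨ε, hε, hkey⟩ := key u hu
    have h0 := hkey v0 hv0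
    have hip : (0:ℝ) < |(inner ℝ u v0 : ℝ)| := by
      rw [abs_of_nonpos (by linarith)]; linarith
    have hle1 : |(inner ℝ u v0 : ℝ)| ≤ 1 := by
      calc |(inner ℝ u v0 : ℝ)| ≤ ‖u‖ * ‖v0‖ := abs_real_inner_le_norm u v0
        _ = 1 := by rw [show ‖u‖ = 1 from hu.1, show ‖v0‖ = 1 from hv0.1, one_mul]
    have step1 : 1 / f v0 ≤ 1 / (|(inner ℝ u v0 : ℝ)| * f v0) := by
      apply one_div_le_one_div_of_le (by positivity)
      exact mul_le_of_le_one_left hfv0.le hle1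
    have step2 : 1 / (|(inner ℝ u v0 : ℝ)| * f v0) ≤ pconj (Omega C) f u :=
      le_csSup (bdd u hu) ⟨v0, hv0, rfl⟩
    linarith
  · exact ⟨1, one_pos, fun u hu => absurd ⟨u, hu⟩ hne⟩
end
end

section
/- Let f : Ω_C → (0,∞) be bounded away from 0. Then the pseudo-conjugate f* equals the radial function of the copolar of the convexification of f: f* = ρ_{⟨f⟩*} on Ω_{C°}. -/
open Set Metric Pointwise

noncomputable section

theorem stmt12 {n : ℕ} (C : Set (E n)) (hC : IsGoodCone C) (f : E n → ℝ)
    (a : ℝ) (ha : 0 < a) (hf : ∀ v ∈ Omega C, a ≤ f v) :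
    ∀ u ∈ Omega (dualCone C), pconj (Omega C) f u = radial (copolar (convexif C f)) u := by
  intro u hu
  have hu1 : ‖u‖ = 1 := hu.1
  have huint : u ∈ interior (dualCone C) := hu.2
  have hCcl := hC.1
  have hCcv := hC.2.1
  have hCsc := hC.2.2.1
  have hCpt := hC.2.2.2.1
  have h0C : (0 : E n) ∈ C := by
    obtain ⟨x, hx⟩ := hC.2.2.2.2
    simpa using hCsc x (interior_subset hx) 0 le_rfl
  have haddC : ∀ x ∈ C, ∀ y ∈ C, x + y ∈ C := by
    intro x hx y hy
    have h2 : (1/2 : ℝ) • x + (1/2 : ℝ) • y ∈ C :=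
      hCcv hx hy (by norm_num) (by norm_num) (by norm_num)
    have h3 := hCsc _ h2 2 (by norm_num)
    have h4 : (2:ℝ) • ((1/2 : ℝ) • x + (1/2 : ℝ) • y) = x + y := by
      rw [smul_add, smul_smul, smul_smul]; norm_num
    rwa [h4] at h3
  have huD : u ∈ dualCone C := interior_subset huint
  obtain ⟨ε, hεpos, hball⟩ : ∃ ε > 0, ball u ε ⊆ dualCone C := by
    rcases Metric.mem_nhds_iff.mp (mem_interior_iff_mem_nhds.mp huint) with ⟨ε, hε, hb⟩
    exact ⟨ε, hε, hb⟩
  have hstrict : ∀ v ∈ C, (inner ℝ u v : ℝ) ≤ -((ε/2) * ‖v‖) := by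
    intro v hv
    rcases eq_or_ne v 0 with rfl | hv0
    · simp
    · have hnv : (0:ℝ) < ‖v‖ := norm_pos_iff.mpr hv0
      have hwball : u + (ε/2) • (‖v‖⁻¹ • v) ∈ ball u ε := by
        rw [mem_ball, dist_eq_norm, add_sub_cancel_left, norm_smul, norm_smul,
          Real.norm_eq_abs, Real.norm_eq_abs, abs_of_pos (half_pos hεpos),
          abs_of_pos (inv_pos.mpr hnv), inv_mul_cancel₀ hnv.ne', mul_one]
        exact half_lt_self hεpos
      have h1 := hball hwball v hv
      rw [inner_add_left, real_inner_smul_left, real_inner_smul_left,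
        real_inner_self_eq_norm_mul_norm] at h1
      have h2 : ‖v‖⁻¹ * (‖v‖ * ‖v‖) = ‖v‖ := by field_simp
      rw [h2] at h1
      linarith
  have hΩu : ∀ v ∈ Omega C, (inner ℝ u v : ℝ) ≤ -(ε/2) := by
    intro v hv
    have h1 : ‖v‖ = 1 := hv.1
    have h2 := hstrict v (interior_subset hv.2)
    rw [h1, mul_one] at h2
    exact h2
  have hint_smul : ∀ r : ℝ, 0 < r → ∀ x ∈ interior C, r • x ∈ interior C := by
    intro r hr x hx
    have hsub : r • interior C ⊆ C := by
      rintro y ⟨z, hz, rfl⟩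
      exact hCsc z (interior_subset hz) r hr.le
    exact interior_maximal hsub (isOpen_interior.smul₀ hr.ne') ⟨x, hx, rfl⟩
  have hΩne : (Omega C).Nonempty := by
    obtain ⟨x, hx⟩ := hC.2.2.2.2
    have hx0 : x ≠ 0 := by
      rintro rfl
      rcases Metric.mem_nhds_iff.mp (mem_interior_iff_mem_nhds.mp hx) with ⟨δ, hδ, hb⟩
      have hnorm : ‖(δ/2) • u‖ < δ := by
        rw [norm_smul, Real.norm_eq_abs, abs_of_pos (half_pos hδ), hu1, mul_one]
        exact half_lt_self hδ
      have h1 : (δ/2) • u ∈ C := hb (by rwa [mem_ball_zero_iff])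
      have h2 : -((δ/2) • u) ∈ C := hb (by rwa [mem_ball_zero_iff, norm_neg])
      have h3 := hCpt _ h1 h2
      have h4 : (δ/2 : ℝ) ≠ 0 := (half_pos hδ).ne'
      have h5 : u ≠ 0 := by intro h; rw [h, norm_zero] at hu1; norm_num at hu1
      rcases smul_eq_zero.mp h3 with h | h
      · exact h4 h
      · exact h5 h
    refine ⟨‖x‖⁻¹ • x, ?_, ?_⟩
    · show ‖‖x‖⁻¹ • x‖ = 1
      rw [norm_smul, Real.norm_eq_abs, abs_of_pos (inv_pos.mpr (norm_pos_iff.mpr hx0)),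
        inv_mul_cancel₀ (norm_pos_iff.mpr hx0).ne']
    · exact hint_smul _ (inv_pos.mpr (norm_pos_iff.mpr hx0)) x hx
  -- core quantities
  set g : E n → ℝ := fun v => f v * (-(inner ℝ u v : ℝ)) with hgdef
  have hglb : ∀ v ∈ Omega C, a * (ε/2) ≤ g v := by
    intro v hv
    have h1 := hΩu v hv
    have h2 := hf v hv
    have h3 : (ε/2) ≤ -(inner ℝ u v : ℝ) := by linarith
    have : a * (ε/2) ≤ f v * (-(inner ℝ u v : ℝ)) :=
      mul_le_mul h2 h3 (by positivity) (le_trans ha.le h2)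
    simpa [hgdef] using this
  have hgpos : ∀ v ∈ Omega C, 0 < g v := fun v hv =>
    lt_of_lt_of_le (by positivity) (hglb v hv)
  set T := g '' Omega C with hTdef
  have hTne : T.Nonempty := hΩne.image g
  have hTbdd : BddBelow T := ⟨a * (ε/2), by rintro t ⟨v, hv, rfl⟩; exact hglb v hv⟩
  set c := sInf T with hcdef
  have hclb : a * (ε/2) ≤ c := le_csInf hTne (by rintro t ⟨v, hv, rfl⟩; exact hglb v hv)
  have hcpos : 0 < c := lt_of_lt_of_le (by positivity) hclb
  have hcle : ∀ v ∈ Omega C, c ≤ g v := fun v hv => csInf_le hTbdd ⟨v, hv, rfl⟩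
  set A := (fun v => 1 / (|(inner ℝ u v : ℝ)| * f v)) '' Omega C with hAdef
  have hAeq : ∀ v ∈ Omega C, 1 / (|(inner ℝ u v : ℝ)| * f v) = 1 / g v := by
    intro v hv
    have h1 := hΩu v hv
    have h2 : |(inner ℝ u v : ℝ)| = -(inner ℝ u v : ℝ) := abs_of_neg (by linarith)
    rw [h2, hgdef, mul_comm]
  have hAne : A.Nonempty := hΩne.image _
  have hAbdd : BddAbove A := by
    refine ⟨1 / c, ?_⟩
    rintro t ⟨v, hv, rfl⟩
    show 1 / (|(inner ℝ u v : ℝ)| * f v) ≤ 1 / c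
    rw [hAeq v hv]
    exact one_div_le_one_div_of_le hcpos (hcle v hv)
  have hsup_le : sSup A ≤ 1 / c := csSup_le hAne (by
    rintro t ⟨v, hv, rfl⟩
    show 1 / (|(inner ℝ u v : ℝ)| * f v) ≤ 1 / c
    rw [hAeq v hv]
    exact one_div_le_one_div_of_le hcpos (hcle v hv))
  have hle_sup : 1 / c ≤ sSup A := by
    obtain ⟨v0, hv0⟩ := hΩne
    have hb0 : 0 < sSup A := by
      have hm : 1 / g v0 ∈ A := ⟨v0, hv0, hAeq v0 hv0⟩
      have := le_csSup hAbdd hm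
      have hp : 0 < 1 / g v0 := one_div_pos.mpr (hgpos v0 hv0)
      exact lt_of_lt_of_le hp this
    have hkey : 1 / sSup A ≤ c := by
      refine le_csInf hTne ?_
      rintro t ⟨v, hv, rfl⟩
      have h1 : 1 / g v ≤ sSup A := le_csSup hAbdd ⟨v, hv, hAeq v hv⟩
      exact (one_div_le (hgpos v hv) hb0).mp h1
    exact (one_div_le hcpos hb0).mpr hkey
  -- the convexification
  set K := convexif C f with hKdef
  have hMK : ∀ v ∈ Omega C, f v • v ∈ K := by
    intro v hv
    rw [hKdef, convexif]
    exact fun K' hK' => hK'.2 v hv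
  set H : Set (E n) := C ∩ {x | (inner ℝ u x : ℝ) ≤ -c} with hHdef
  have hMH : ∀ v ∈ Omega C, f v • v ∈ H := by
    intro v hv
    constructor
    · exact hCsc v (interior_subset hv.2) (f v) (le_trans ha.le (hf v hv))
    · show (inner ℝ u (f v • v) : ℝ) ≤ -c
      rw [real_inner_smul_right]
      have h1 := hcle v hv
      rw [hgdef] at h1
      simp only at h1
      nlinarith
  have hHpc : IsPseudoCone C H := by
    obtain ⟨v0, hv0⟩ := hΩne
    refine ⟨⟨f v0 • v0, hMH v0 hv0⟩, ?_, ?_, inter_subset_left, ?_, ?_⟩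
    · exact hCcl.inter (isClosed_le (Continuous.inner continuous_const continuous_id) continuous_const)
    · refine hCcv.inter (convex_halfSpace_le ?_ (-c))
      exact ⟨fun x y => inner_add_right u x y, fun r x => real_inner_smul_right u x r⟩
    · rintro ⟨-, h⟩
      rw [mem_setOf_eq, inner_zero_right] at h
      linarith
    · apply Set.Subset.antisymm
      · rintro x hx
        rw [Set.mem_add] at hx
        obtain ⟨y, hy, z, hz, rfl⟩ := hx
        refine ⟨haddC y hy.1 z hz, ?_⟩
        have h1 : (inner ℝ u y : ℝ) ≤ -c := hy.2
        have h2 : (inner ℝ u z : ℝ) ≤ 0 := huD z hz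
        show (inner ℝ u (y + z) : ℝ) ≤ -c
        rw [inner_add_right]
        linarith
      · intro x hx
        exact ⟨x, hx, 0, h0C, add_zero x⟩
  have hKH : K ⊆ H := sInter_subset_of_mem ⟨hHpc, hMH⟩
  -- the radial set
  set R := {r : ℝ | 0 < r ∧ r • u ∈ copolar K} with hRdef
  have hmem : 1 / c ∈ R := by
    refine ⟨by positivity, ?_⟩
    intro y hy
    have h1 : (inner ℝ u y : ℝ) ≤ -c := (hKH hy).2
    rw [real_inner_smul_left]
    have h2 := mul_le_mul_of_nonneg_left h1 (le_of_lt (by positivity : (0:ℝ) < 1/c))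
    have h3 : (1/c) * (-c) = -1 := by field_simp
    linarith
  have hlbR : ∀ r ∈ R, 1 / c ≤ r := by
    rintro r ⟨hr, hrc⟩
    have hub' : ∀ t ∈ A, t ≤ r := by
      rintro t ⟨v, hv, rfl⟩
      have h1 : (inner ℝ (r • u) (f v • v) : ℝ) ≤ -1 := hrc _ (hMK v hv)
      rw [real_inner_smul_left, real_inner_smul_right] at h1
      show 1 / (|(inner ℝ u v : ℝ)| * f v) ≤ r
      rw [hAeq v hv, div_le_iff₀ (hgpos v hv)]
      have h2 : r * g v = -(r * (f v * (inner ℝ u v : ℝ))) := by rw [hgdef]; ring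
      linarith
    exact le_trans hle_sup (csSup_le hAne hub')
  have hR : sInf R = 1 / c := le_antisymm (csInf_le ⟨1/c, hlbR⟩ hmem) (le_csInf ⟨1/c, hmem⟩ hlbR)
  show sSup A = sInf R
  rw [hR]
  exact le_antisymm hsup_le hle_sup
end
end

section
/- For every C-pseudo-cone K, the pseudo-conjugate of its radial function equals the radial function of its copolar: (ρ_K)* = ρ_{K*} on Ω_{C°}. -/
open Set Metric Pointwise

noncomputable section

section aux
variable {n : ℕ}

lemma cone_add_mem_s13 {C : Set (E n)} (hconv : Convex ℝ C)
    (hcone : ∀ x ∈ C, ∀ r : ℝ, 0 ≤ r → r • x ∈ C)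
    {a b : E n} (ha : a ∈ C) (hb : b ∈ C) : a + b ∈ C := by
  have h := hconv ha hb (by norm_num : (0:ℝ) ≤ 1/2) (by norm_num : (0:ℝ) ≤ 1/2) (by norm_num)
  have h2 := hcone _ h 2 (by norm_num)
  have e : (2:ℝ) • ((1/2 : ℝ) • a + (1/2 : ℝ) • b) = a + b := by
    rw [smul_add, smul_smul, smul_smul]; norm_num
  rwa [e] at h2

lemma cone_smul_interior {C : Set (E n)}
    (hcone : ∀ x ∈ C, ∀ r : ℝ, 0 ≤ r → r • x ∈ C)
    {c : E n} {s : ℝ} (hc : c ∈ interior C) (hs : 0 < s) : s • c ∈ interior C := by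
  rw [mem_interior_iff_mem_nhds, Metric.mem_nhds_iff] at hc ⊢
  obtain ⟨δ, hδ, hball⟩ := hc
  refine ⟨s * δ, by positivity, fun y hy => ?_⟩
  have hmem : s⁻¹ • y ∈ ball c δ := by
    rw [mem_ball, dist_eq_norm] at hy ⊢
    have e : s⁻¹ • y - c = s⁻¹ • (y - s • c) := by
      rw [smul_sub, smul_smul, inv_mul_cancel₀ hs.ne', one_smul]
    rw [e, norm_smul, norm_inv, Real.norm_eq_abs, abs_of_pos hs]
    calc s⁻¹ * ‖y - s • c‖ < s⁻¹ * (s * δ) := by gcongr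
      _ = δ := by field_simp
  have := hcone _ (hball hmem) s hs.le
  rwa [smul_smul, mul_inv_cancel₀ hs.ne', one_smul] at this

lemma cone_add_interior {C : Set (E n)} (hconv : Convex ℝ C)
    (hcone : ∀ x ∈ C, ∀ r : ℝ, 0 ≤ r → r • x ∈ C)
    {y c : E n} (hy : y ∈ C) (hc : c ∈ interior C) : y + c ∈ interior C := by
  rw [mem_interior_iff_mem_nhds, Metric.mem_nhds_iff] at hc ⊢
  obtain ⟨δ, hδ, hball⟩ := hc
  refine ⟨δ, hδ, fun z hz => ?_⟩
  have hmem : z - y ∈ ball c δ := by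
    rw [mem_ball, dist_eq_norm] at hz ⊢
    rwa [sub_sub]
  have := cone_add_mem_s13 hconv hcone hy (hball hmem)
  rwa [add_sub_cancel] at this


/-- norm lower bound on K -/
lemma norm_lb {K : Set (E n)} (hcl : IsClosed K) (h0 : (0 : E n) ∉ K) :
    ∃ d > 0, ∀ y ∈ K, d ≤ ‖y‖ := by
  have : Kᶜ ∈ nhds (0 : E n) := hcl.isOpen_compl.mem_nhds h0
  rw [Metric.mem_nhds_iff] at this
  obtain ⟨d, hd, hsub⟩ := this
  refine ⟨d, hd, fun y hy => ?_⟩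
  by_contra h
  push_neg at h
  exact hsub (by simpa [mem_ball, dist_eq_norm] using h) hy

lemma radial_spec_s13 {C K : Set (E n)}
    (hconv : Convex ℝ C) (hcone : ∀ x ∈ C, ∀ r : ℝ, 0 ≤ r → r • x ∈ C)
    (hKne : K.Nonempty) (hKcl : IsClosed K) (hKC : K ⊆ C) (h0 : (0 : E n) ∉ K)
    (hKadd : K + C = K) {v : E n} (hv1 : ‖v‖ = 1) (hvC : v ∈ interior C) :
    0 < radial K v ∧ (radial K v) • v ∈ K ∧
      ∀ r : ℝ, 0 < r → r • v ∈ K → radial K v ≤ r := by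
  obtain ⟨d, hd, hdK⟩ := norm_lb hKcl h0
  set A : Set ℝ := {r : ℝ | 0 < r ∧ r • v ∈ K} with hA
  have hnorm : ∀ r : ℝ, 0 < r → ‖r • v‖ = r := by
    intro r hr; rw [norm_smul, Real.norm_eq_abs, abs_of_pos hr, hv1, mul_one]
  have hAlb : ∀ r ∈ A, d ≤ r := by
    intro r hr
    have := hdK _ hr.2
    rwa [hnorm r hr.1] at this
  -- nonempty
  obtain ⟨y₀, hy₀⟩ := hKne
  have hAne : A.Nonempty := by
    rw [mem_interior_iff_mem_nhds, Metric.mem_nhds_iff] at hvC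
    obtain ⟨δ, hδ, hball⟩ := hvC
    set r : ℝ := ‖y₀‖ / δ + 1 with hr
    have hrpos : 0 < r := by positivity
    have hry : ‖y₀‖ < r * δ := by
      rw [hr, add_mul, div_mul_cancel₀ _ hδ.ne']
      nlinarith
    have hmem : v - r⁻¹ • y₀ ∈ ball v δ := by
      rw [mem_ball, dist_eq_norm]
      have : v - r⁻¹ • y₀ - v = -(r⁻¹ • y₀) := by abel
      rw [this, norm_neg, norm_smul, norm_inv, Real.norm_eq_abs, abs_of_pos hrpos]
      rw [inv_mul_lt_iff₀ hrpos]
      linarith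
    have hCm : r • (v - r⁻¹ • y₀) ∈ C := hcone _ (hball hmem) r hrpos.le
    have he : y₀ + r • (v - r⁻¹ • y₀) = r • v := by
      rw [smul_sub, smul_smul, mul_inv_cancel₀ hrpos.ne', one_smul]; abel
    have : r • v ∈ K + C := by
      rw [← he]; exact Set.add_mem_add hy₀ hCm
    rw [hKadd] at this
    exact ⟨r, hrpos, this⟩
  have hAbdd : BddBelow A := ⟨d, hAlb⟩
  have hAcl : IsClosed A := by
    have : A = (fun r : ℝ => r • v) ⁻¹' K ∩ Ici d := by
      ext r
      constructor
      · intro hr; exact ⟨hr.2, hAlb r hr⟩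
      · intro hr; exact ⟨lt_of_lt_of_le hd hr.2, hr.1⟩
    rw [this]
    exact (hKcl.preimage (by continuity)).inter isClosed_Ici
  have hmem : sInf A ∈ A := hAcl.csInf_mem hAne hAbdd
  exact ⟨hmem.1, hmem.2, fun r hr hrK => csInf_le hAbdd ⟨hr, hrK⟩⟩


end aux

theorem stmt13 {n : ℕ} (C K : Set (E n)) (hC : IsGoodCone C) (hK : IsPseudoCone C K) :
    ∀ u ∈ Omega (dualCone C), pconj (Omega C) (radial K) u = radial (copolar K) u := by
  obtain ⟨hCcl, hconv, hcone, hpoint, hCint⟩ := hC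
  obtain ⟨hKne, hKcl, hKconv, hKC, h0, hKadd⟩ := hK
  rintro u ⟨hu1, huint⟩
  simp only [mem_setOf_eq] at hu1
  -- interior of dual cone gives uniform negativity
  obtain ⟨ε₀, hε₀, hballu⟩ := Metric.mem_nhds_iff.mp (mem_interior_iff_mem_nhds.mp huint)
  have hneg : ∀ y ∈ C, (inner ℝ u y : ℝ) ≤ -(ε₀/2) * ‖y‖ := by
    intro y hy
    rcases eq_or_ne y 0 with rfl | hy0
    · simp
    · have hny : (0:ℝ) < ‖y‖ := norm_pos_iff.mpr hy0
      have hmem : u + (ε₀/2) • (‖y‖⁻¹ • y) ∈ ball u ε₀ := by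
        rw [mem_ball, dist_eq_norm, add_sub_cancel_left, norm_smul, norm_smul,
          norm_inv, norm_norm, Real.norm_eq_abs, abs_of_pos (by positivity : (0:ℝ) < ε₀/2),
          inv_mul_cancel₀ hny.ne', mul_one]
        linarith
      have := hballu hmem y hy
      rw [inner_add_left, real_inner_smul_left, real_inner_smul_left,
        real_inner_self_eq_norm_sq] at this
      have hq : (ε₀/2) * (‖y‖⁻¹ * ‖y‖^2) = (ε₀/2) * ‖y‖ := by
        field_simp
      nlinarith
  obtain ⟨d, hd, hdK⟩ := norm_lb hKcl h0
  -- on K, inner is at most -(ε₀/2)*d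
  have hnegK : ∀ y ∈ K, (inner ℝ u y : ℝ) ≤ -((ε₀/2) * d) := by
    intro y hy
    have h1 := hneg y (hKC hy)
    have h2 := hdK y hy
    nlinarith [hε₀]
  set S : Set ℝ := (fun v => 1 / (|(inner ℝ u v : ℝ)| * radial K v)) '' Omega C with hS
  set B : Set ℝ := {r : ℝ | 0 < r ∧ r • u ∈ copolar K} with hB
  -- B is nonempty
  have hb₀ : (1 / ((ε₀/2) * d)) ∈ B := by
    constructor
    · positivity
    · intro y hy
      have h1 := hnegK y hy
      rw [real_inner_smul_left]
      have hpos : (0:ℝ) < (ε₀/2) * d := by positivity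
      rw [div_mul_eq_mul_div, one_mul, div_le_iff₀ hpos]
      nlinarith
  have hBne : B.Nonempty := ⟨_, hb₀⟩
  -- every element of S is ≤ every element of B
  have hSB : ∀ s ∈ S, ∀ b ∈ B, s ≤ b := by
    rintro s ⟨v, ⟨hv1, hvC⟩, rfl⟩ b ⟨hbpos, hbcop⟩
    simp only [mem_setOf_eq] at hv1
    obtain ⟨hρpos, hρK, _⟩ := radial_spec_s13 hconv hcone hKne hKcl hKC h0 hKadd hv1 hvC
    set ρ := radial K v
    have hcop := hbcop _ hρK
    rw [real_inner_smul_left, real_inner_smul_right] at hcop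
    have hiv : (inner ℝ u v : ℝ) < 0 := by
      have h := hneg v (interior_subset hvC)
      rw [hv1, mul_one] at h
      linarith
    have habs : |(inner ℝ u v : ℝ)| = -(inner ℝ u v : ℝ) := abs_of_neg hiv
    have hkey : 1/b ≤ |(inner ℝ u v : ℝ)| * ρ := by
      rw [habs, div_le_iff₀ hbpos]; nlinarith
    have hpos : (0:ℝ) < 1/b := by positivity
    calc 1 / (|(inner ℝ u v : ℝ)| * ρ) ≤ 1 / (1/b) := by
          apply one_div_le_one_div_of_le hpos hkey
      _ = b := one_div_one_div b
  -- S is nonempty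
  obtain ⟨c, hc⟩ := hCint
  have hc0 : c ≠ 0 := by
    rintro rfl
    obtain ⟨δ, hδ, hball⟩ := Metric.mem_nhds_iff.mp (mem_interior_iff_mem_nhds.mp hc)
    have hu0 : u ≠ 0 := by intro h; rw [h] at hu1; simp at hu1
    set x : E n := (δ/2) • u with hx
    have hxn : ‖x‖ = δ/2 := by
      rw [hx, norm_smul, Real.norm_eq_abs, abs_of_pos (by positivity), hu1, mul_one]
    have hxC : x ∈ C := hball (by rw [mem_ball, dist_eq_norm, sub_zero, hxn]; linarith)
    have hxC' : -x ∈ C := hball (by rw [mem_ball, dist_eq_norm, sub_zero, norm_neg, hxn]; linarith)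
    have := hpoint x hxC hxC'
    rw [this] at hxn
    simp at hxn
    linarith
  have hcC : c ∈ C := interior_subset hc
  have hcn : (0:ℝ) < ‖c‖ := norm_pos_iff.mpr hc0
  have hv₀ : (‖c‖⁻¹ • c) ∈ Omega C := by
    constructor
    · simp only [mem_setOf_eq]
      rw [norm_smul, norm_inv, norm_norm, inv_mul_cancel₀ hcn.ne']
    · exact cone_smul_interior hcone hc (by positivity)
  have hSne : S.Nonempty := ⟨_, Set.mem_image_of_mem _ hv₀⟩
  have hSbdd : BddAbove S := ⟨_, fun s hs => hSB s hs _ hb₀⟩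
  set M := sSup S with hM
  -- M > 0
  have hMpos : 0 < M := by
    have h1 : (1 / (|(inner ℝ u (‖c‖⁻¹ • c) : ℝ)| * radial K (‖c‖⁻¹ • c))) ≤ M :=
      le_csSup hSbdd (Set.mem_image_of_mem _ hv₀)
    obtain ⟨hρpos, hρK, _⟩ := radial_spec_s13 hconv hcone hKne hKcl hKC h0 hKadd hv₀.1 hv₀.2
    have hiv : (inner ℝ u (‖c‖⁻¹ • c) : ℝ) < 0 := by
      have h := hneg _ (interior_subset hv₀.2)
      rw [hv₀.1, mul_one] at h
      linarith
    have : (0:ℝ) < 1 / (|(inner ℝ u (‖c‖⁻¹ • c) : ℝ)| * radial K (‖c‖⁻¹ • c)) := by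
      have := abs_pos.mpr hiv.ne
      positivity
    linarith
  -- key: M • u ∈ copolar K
  have hMcop : M • u ∈ copolar K := by
    intro y hy
    have hyC : y ∈ C := hKC hy
    set b : ℝ := -(inner ℝ u y : ℝ) with hbdef
    have hbpos : 0 < b := by
      have := hnegK y hy
      have : (inner ℝ u y : ℝ) < 0 := by nlinarith [hε₀, hd]
      simpa [hbdef] using this
    set a : ℝ := -(inner ℝ u c : ℝ) with hadef
    have ha : 0 ≤ a := by
      have := hneg c hcC
      simp only [hadef]
      nlinarith [norm_nonneg c]
    -- for all ε > 0 : 1/(b + ε*a) ≤ M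
    have hstep : ∀ ε : ℝ, 0 < ε → 1 / (b + ε * a) ≤ M := by
      intro ε hε
      set yε : E n := y + ε • c with hyε
      have hyεK : yε ∈ K := by
        have : yε ∈ K + C := Set.add_mem_add hy (hcone c hcC ε hε.le)
        rwa [hKadd] at this
      have hyεint : yε ∈ interior C := cone_add_interior hconv hcone hyC
        (cone_smul_interior hcone hc hε)
      have hyεn : (0:ℝ) < ‖yε‖ := lt_of_lt_of_le hd (hdK _ hyεK)
      set vε : E n := ‖yε‖⁻¹ • yε with hvε
      have hvεΩ : vε ∈ Omega C := by
        constructor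
        · simp only [mem_setOf_eq]
          rw [hvε, norm_smul, norm_inv, norm_norm, inv_mul_cancel₀ hyεn.ne']
        · exact cone_smul_interior hcone hyεint (by positivity)
      obtain ⟨hρpos, hρK, hρmin⟩ := radial_spec_s13 hconv hcone hKne hKcl hKC h0 hKadd hvεΩ.1 hvεΩ.2
      have hρle : radial K vε ≤ ‖yε‖ := by
        apply hρmin _ hyεn
        rw [hvε, smul_smul, mul_inv_cancel₀ hyεn.ne', one_smul]
        exact hyεK
      have hivε : (inner ℝ u vε : ℝ) < 0 := by
        have h := hneg _ (interior_subset hvεΩ.2)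
        rw [hvεΩ.1, mul_one] at h
        linarith
      have habs : (0:ℝ) < |(inner ℝ u vε : ℝ)| := abs_pos.mpr hivε.ne
      have hinK : (inner ℝ u yε : ℝ) = -(b + ε * a) := by
        rw [hyε, inner_add_right, real_inner_smul_right, hbdef, hadef]; ring
      have hfact : |(inner ℝ u vε : ℝ)| * ‖yε‖ = b + ε * a := by
        have h1 : (inner ℝ u yε : ℝ) = ‖yε‖ * (inner ℝ u vε : ℝ) := by
          rw [hvε, real_inner_smul_right]
          field_simp
        have h2 : |(inner ℝ u yε : ℝ)| = ‖yε‖ * |(inner ℝ u vε : ℝ)| := by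
          rw [h1, abs_mul, abs_of_pos hyεn]
        have h3 : |(inner ℝ u yε : ℝ)| = b + ε * a := by
          rw [hinK, abs_neg, abs_of_pos]; positivity
        rw [← h3, h2]; ring
      have hle : 1 / (b + ε * a) ≤ 1 / (|(inner ℝ u vε : ℝ)| * radial K vε) := by
        apply one_div_le_one_div_of_le (by positivity)
        rw [← hfact]
        exact mul_le_mul_of_nonneg_left hρle habs.le
      exact hle.trans (le_csSup hSbdd (Set.mem_image_of_mem _ hvεΩ))
    -- limit as ε → 0⁺
    have htend : Filter.Tendsto (fun ε : ℝ => 1 / (b + ε * a)) (nhdsWithin 0 (Set.Ioi 0))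
        (nhds (1 / b)) := by
      have h1 : Filter.Tendsto (fun ε : ℝ => b + ε * a) (nhds 0) (nhds b) := by
        have hco : Continuous (fun ε : ℝ => b + ε * a) :=
          continuous_const.add (continuous_id.mul continuous_const)
        have h2 := hco.tendsto 0
        simpa using h2
      have h2 : Filter.Tendsto (fun ε : ℝ => 1 / (b + ε * a)) (nhds 0) (nhds (1 / b)) :=
        Filter.Tendsto.div (tendsto_const_nhds : Filter.Tendsto (fun _ : ℝ => (1:ℝ)) (nhds 0) (nhds 1)) h1 hbpos.ne'
      exact h2.mono_left nhdsWithin_le_nhds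
    have hlim : 1 / b ≤ M :=
      le_of_tendsto htend (Filter.eventually_of_mem self_mem_nhdsWithin
        (fun ε hε => hstep ε hε))
    -- conclude
    rw [real_inner_smul_left]
    have : (inner ℝ u y : ℝ) = -b := by rw [hbdef]; ring
    rw [this]
    have : 1 ≤ M * b := by
      rw [div_le_iff₀ hbpos] at hlim; linarith
    nlinarith
  -- finish
  have hMB : M ∈ B := ⟨hMpos, hMcop⟩
  have hBbdd : BddBelow B := ⟨0, fun b hb => hb.1.le⟩
  apply le_antisymm
  · exact le_csInf hBne (fun b hb => csSup_le hSne (fun s hs => hSB s hs b hb))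
  · exact csInf_le hBbdd hMB
end
end

section
/- Let f : Ω_C → (0,∞) be bounded away from 0. For (v,u) ∈ Ω_C × Ω_{C°}, equality f(v) f*(u) = 1/|⟨u,v⟩| holds if and only if ρ_{⟨f⟩}(v) = f(v) and u is an outer unit normal vector of ⟨f⟩ at the boundary point ρ_{⟨f⟩}(v)·v. -/
open Set Metric Pointwise

noncomputable section

/-- If `u` is in the interior of the dual cone, then `⟨u, ·⟩` is negative, proportionally
to the norm, on `C`. -/
lemma dual_int_neg {n : ℕ} {C : Set (E n)} {u : E n}
    (hu : u ∈ interior (dualCone C)) :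
    ∃ ε : ℝ, 0 < ε ∧ ∀ x ∈ C, (inner ℝ u x : ℝ) ≤ -(ε * ‖x‖) := by
  obtain ⟨ε, hε, hball⟩ := Metric.isOpen_iff.mp isOpen_interior u hu
  refine ⟨ε/2, by linarith, fun x hx => ?_⟩
  rcases eq_or_ne x 0 with rfl | hx0
  · simp
  · have hxn : (0:ℝ) < ‖x‖ := norm_pos_iff.mpr hx0
    have hmem : u + (ε/2) • (‖x‖⁻¹ • x) ∈ dualCone C := by
      refine interior_subset (hball ?_)
      have hns : ‖(ε/2) • (‖x‖⁻¹ • x)‖ = ε/2 := by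
        rw [norm_smul, norm_smul, norm_inv, norm_norm, Real.norm_eq_abs,
          abs_of_pos (by linarith : (0:ℝ) < ε/2)]
        field_simp
      rw [Metric.mem_ball, dist_eq_norm, add_sub_cancel_left, hns]
      linarith
    have h0 := hmem x hx
    rw [inner_add_left, real_inner_smul_left, real_inner_smul_left,
      real_inner_self_eq_norm_mul_norm] at h0
    have hkey : ‖x‖⁻¹ * (‖x‖ * ‖x‖) = ‖x‖ := by field_simp
    rw [hkey] at h0
    linarith

theorem stmt16 {n : ℕ} (C : Set (E n)) (hC : IsGoodCone C) (f : E n → ℝ)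
    (a : ℝ) (ha : 0 < a) (hf : ∀ v ∈ Omega C, a ≤ f v)
    (v u : E n) (hv : v ∈ Omega C) (hu : u ∈ Omega (dualCone C)) :
    f v * pconj (Omega C) f u = 1 / |(inner ℝ u v : ℝ)| ↔
      (radial (convexif C f) v = f v ∧
        IsNormalAt (convexif C f) u (radial (convexif C f) v • v)) := by
  obtain ⟨hCcl, hCcv, hCcone, hCpt, hCint⟩ := hC
  obtain ⟨ε, hε, hkey⟩ := dual_int_neg hu.2
  have huC : u ∈ dualCone C := interior_subset hu.2
  have hΩC : ∀ w ∈ Omega C, w ∈ C := fun w hw => interior_subset hw.2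
  have hfpos : ∀ w ∈ Omega C, 0 < f w := fun w hw => lt_of_lt_of_le ha (hf w hw)
  have hptC : ∀ w ∈ Omega C, f w • w ∈ C := fun w hw =>
    hCcone w (hΩC w hw) (f w) (hfpos w hw).le
  have hneg : ∀ w ∈ Omega C, (inner ℝ u w : ℝ) ≤ -ε := by
    intro w hw
    have h := hkey w (hΩC w hw)
    rwa [hw.1, mul_one] at h
  have hwneg : ∀ w ∈ Omega C, (inner ℝ u w : ℝ) < 0 := fun w hw =>
    lt_of_le_of_lt (hneg w hw) (by linarith)
  have habs : ∀ w ∈ Omega C, |(inner ℝ u w : ℝ)| = -(inner ℝ u w : ℝ) := fun w hw =>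
    abs_of_neg (hwneg w hw)
  have huvneg : (inner ℝ u v : ℝ) < 0 := hwneg v hv
  have hfv : 0 < f v := hfpos v hv
  have hAv : 0 < |(inner ℝ u v : ℝ)| := abs_pos.mpr huvneg.ne
  have hBv : 0 < |(inner ℝ u v : ℝ)| * f v := mul_pos hAv hfv
  have hmemK : ∀ w ∈ Omega C, f w • w ∈ convexif C f := by
    intro w hw
    exact mem_sInter.mpr fun K hK => hK.2 w hw
  have hbdd : BddAbove ((fun w => 1 / (|(inner ℝ u w : ℝ)| * f w)) '' Omega C) := by
    refine ⟨1/(ε*a), ?_⟩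
    rintro y ⟨w, hw, rfl⟩
    have h1 : ε ≤ |(inner ℝ u w : ℝ)| := by
      rw [habs w hw]; linarith [hneg w hw]
    have h2 : ε * a ≤ |(inner ℝ u w : ℝ)| * f w :=
      mul_le_mul h1 (hf w hw) ha.le (abs_nonneg _)
    exact one_div_le_one_div_of_le (by positivity) h2
  have hne : ((fun w => 1 / (|(inner ℝ u w : ℝ)| * f w)) '' Omega C).Nonempty :=
    ⟨_, v, hv, rfl⟩
  have hzeroC : (0 : E n) ∈ C := by
    obtain ⟨x0, hx0⟩ := hCint
    have := hCcone x0 (interior_subset hx0) 0 le_rfl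
    simpa using this
  constructor
  · -- forward direction
    intro heq
    have hpc : pconj (Omega C) f u = 1 / (|(inner ℝ u v : ℝ)| * f v) := by
      calc pconj (Omega C) f u = (f v * pconj (Omega C) f u) / f v := by
            field_simp
        _ = (1/|(inner ℝ u v : ℝ)|) / f v := by rw [heq]
        _ = 1 / (|(inner ℝ u v : ℝ)| * f v) := by rw [div_div]
    have hfvv : (inner ℝ u (f v • v) : ℝ) = -(f v * |(inner ℝ u v : ℝ)|) := by
      rw [real_inner_smul_right, habs v hv]; ring
    have hterm : ∀ w ∈ Omega C,
        (inner ℝ u (f w • w) : ℝ) ≤ -(f v * |(inner ℝ u v : ℝ)|) := by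
      intro w hw
      have hle : 1 / (|(inner ℝ u w : ℝ)| * f w) ≤ 1 / (|(inner ℝ u v : ℝ)| * f v) := by
        rw [← hpc]
        exact le_csSup hbdd ⟨w, hw, rfl⟩
      have hBw : 0 < |(inner ℝ u w : ℝ)| * f w :=
        mul_pos (abs_pos.mpr (hwneg w hw).ne) (hfpos w hw)
      have h3 : |(inner ℝ u v : ℝ)| * f v ≤ |(inner ℝ u w : ℝ)| * f w :=
        le_of_one_div_le_one_div hBw hle
      rw [habs w hw, habs v hv] at h3
      rw [real_inner_smul_right, habs v hv]
      nlinarith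
    set β : ℝ := f v * |(inner ℝ u v : ℝ)| with hβ
    have hβpos : 0 < β := mul_pos hfv hAv
    set H : Set (E n) := C ∩ {x | (inner ℝ u x : ℝ) ≤ -β} with hHdef
    have hHpc : IsPseudoCone C H := by
      refine ⟨⟨f v • v, hptC v hv, le_of_eq hfvv⟩, ?_, ?_, fun x hx => hx.1, ?_, ?_⟩
      · exact hCcl.inter (isClosed_le (Continuous.inner continuous_const continuous_id)
          continuous_const)
      · refine hCcv.inter (convex_halfSpace_le ?_ (-β))
        exact ⟨fun x y => inner_add_right u x y, fun c x => real_inner_smul_right u x c⟩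
      · intro h0
        have := h0.2
        rw [mem_setOf_eq, inner_zero_right] at this
        linarith
      · ext x
        rw [Set.mem_add]
        constructor
        · rintro ⟨y, hy, z, hz, rfl⟩
          have hmid : (1/2 : ℝ) • y + (1/2 : ℝ) • z ∈ C :=
            hCcv hy.1 hz (by norm_num) (by norm_num) (by norm_num)
          have hsum : y + z ∈ C := by
            have h2 := hCcone _ hmid 2 (by norm_num)
            have heq2 : (2:ℝ) • ((1/2:ℝ) • y + (1/2:ℝ) • z) = y + z := by
              rw [smul_add, smul_smul, smul_smul]; norm_num
            rwa [heq2] at h2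
          refine ⟨hsum, ?_⟩
          have huz := huC z hz
          have hy2 := hy.2
          rw [mem_setOf_eq] at hy2 ⊢
          rw [inner_add_right]
          linarith
        · intro hx
          exact ⟨x, hx, 0, hzeroC, add_zero x⟩
    have hSH : ∀ w ∈ Omega C, f w • w ∈ H := fun w hw => ⟨hptC w hw, hterm w hw⟩
    have hKH : convexif C f ⊆ H := sInter_subset_of_mem ⟨hHpc, hSH⟩
    have hfvK : f v • v ∈ convexif C f := hmemK v hv
    have hlb : ∀ r ∈ {r : ℝ | 0 < r ∧ r • v ∈ convexif C f}, f v ≤ r := by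
      rintro r ⟨hr, hrK⟩
      have h := (hKH hrK).2
      rw [mem_setOf_eq, real_inner_smul_right] at h
      have hb : -β = f v * (inner ℝ u v : ℝ) := by rw [hβ, habs v hv]; ring
      rw [hb] at h
      by_contra hcon
      push_neg at hcon
      have := mul_lt_mul_of_neg_right hcon huvneg
      linarith
    have hrad : radial (convexif C f) v = f v := by
      apply le_antisymm
      · exact csInf_le ⟨f v, hlb⟩ ⟨hfv, hfvK⟩
      · exact le_csInf ⟨f v, hfv, hfvK⟩ hlb
    refine ⟨hrad, ?_⟩
    rw [hrad]
    refine ⟨hfvK, fun y hy => ?_⟩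
    have h := (hKH hy).2
    rw [mem_setOf_eq] at h
    rw [inner_sub_right]
    linarith [hfvv]
  · -- reverse direction
    rintro ⟨hrad, hnorm⟩
    rw [hrad] at hnorm
    have hterm2 : ∀ w ∈ Omega C,
        1 / (|(inner ℝ u w : ℝ)| * f w) ≤ 1 / (|(inner ℝ u v : ℝ)| * f v) := by
      intro w hw
      have h0 := hnorm.2 _ (hmemK w hw)
      rw [inner_sub_right, real_inner_smul_right, real_inner_smul_right] at h0
      apply one_div_le_one_div_of_le hBv
      rw [habs w hw, habs v hv]
      nlinarith
    have hpc : pconj (Omega C) f u = 1 / (|(inner ℝ u v : ℝ)| * f v) := by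
      apply le_antisymm
      · apply csSup_le hne
        rintro y ⟨w, hw, rfl⟩
        exact hterm2 w hw
      · exact le_csSup hbdd ⟨v, hv, rfl⟩
    rw [hpc, mul_one_div, mul_comm (|(inner ℝ u v : ℝ)|) (f v), ← div_div,
      div_self hfv.ne', one_div]
end
end

section
/- Let K be a C-pseudo-cone, u ∈ Ω_{C°}, and v ∈ Ω_C. Then u is an outer normal vector of K at the point ρ_K(v)·v if and only if |⟨u,v⟩| ρ_{K*}(u) = −h_{K*}(v), i.e., v attains the infimum defining −h_{K*}(v) = inf_{u'∈Ω_{C°}}|⟨u',v⟩|ρ_{K*}(u') at u; equivalently v is a normal vector of K* at ρ_{K*}(u)·u. -/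
open Set Metric Pointwise

noncomputable section

namespace Aux18

variable {n : ℕ} {C K : Set (E n)}

lemma mem_of_add (hK : IsPseudoCone C K) {a b : E n} (ha : a ∈ K) (hb : b ∈ C) :
    a + b ∈ K := by
  have := hK.2.2.2.2.2
  rw [← this]; exact Set.add_mem_add ha hb

/-- interior of dual cone: strictly negative inner products. -/
lemma dual_int_bound {u : E n} (hu : u ∈ interior (dualCone C)) :
    ∃ c > (0:ℝ), ∀ y ∈ C, (inner ℝ u y : ℝ) ≤ -(c * ‖y‖) := by
  obtain ⟨ε, hε, hball⟩ := Metric.isOpen_iff.mp isOpen_interior u hu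
  refine ⟨ε/2, by positivity, fun y hy => ?_⟩
  rcases eq_or_ne y 0 with rfl | hy0
  · simp
  have hny : (0:ℝ) < ‖y‖ := norm_pos_iff.mpr hy0
  have hw : u + (ε/2) • (‖y‖⁻¹ • y) ∈ dualCone C := by
    apply interior_subset (hball ?_)
    rw [Metric.mem_ball, dist_eq_norm, add_sub_cancel_left, norm_smul, norm_smul]
    simp only [Real.norm_eq_abs, norm_norm]
    rw [abs_of_nonneg (by positivity), abs_of_nonneg (by positivity),
      inv_mul_cancel₀ hny.ne']
    linarith
  have h0 := hw y hy
  rw [inner_add_left, real_inner_smul_left, real_inner_smul_left,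
    real_inner_self_eq_norm_sq] at h0
  have : ‖y‖⁻¹ * ‖y‖^2 = ‖y‖ := by field_simp
  nlinarith [this]

/-- distance from 0 to K. -/
lemma exists_eps (hK : IsPseudoCone C K) : ∃ ε > (0:ℝ), ∀ y ∈ K, ε ≤ ‖y‖ := by
  have h0 : (0 : E n) ∈ Kᶜ := hK.2.2.2.2.1
  obtain ⟨ε, hε, hball⟩ := Metric.isOpen_iff.mp hK.2.1.isOpen_compl 0 h0
  refine ⟨ε, hε, fun y hy => ?_⟩
  by_contra h
  push_neg at h
  exact (hball (by simpa [Metric.mem_ball] using h)) hy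

lemma radial_spec (hC : IsGoodCone C) (hK : IsPseudoCone C K) {v : E n}
    (hv : v ∈ Omega C) :
    0 < radial K v ∧ radial K v • v ∈ K ∧ ∀ r : ℝ, 0 < r → r • v ∈ K → radial K v ≤ r := by
  obtain ⟨ε, hε, hεK⟩ := exists_eps hK
  have hv1 : ‖v‖ = 1 := hv.1
  -- the set S
  set S : Set ℝ := {r : ℝ | 0 < r ∧ r • v ∈ K} with hS
  have hlb : ∀ r ∈ S, ε ≤ r := by
    intro r hr
    have := hεK _ hr.2
    rw [norm_smul, hv1, mul_one, Real.norm_eq_abs, abs_of_pos hr.1] at this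
    exact this
  have hbdd : BddBelow S := ⟨ε, hlb⟩
  -- nonempty
  obtain ⟨x, hx⟩ := hK.1
  obtain ⟨δ, hδ, hballv⟩ := Metric.isOpen_iff.mp isOpen_interior v hv.2
  have hSne : S.Nonempty := by
    refine ⟨max 1 (‖x‖ / δ * 2), lt_of_lt_of_le one_pos (le_max_left _ _), ?_⟩
    set r : ℝ := max 1 (‖x‖ / δ * 2)
    have hr1 : (1:ℝ) ≤ r := le_max_left _ _
    have hrpos : (0:ℝ) < r := lt_of_lt_of_le one_pos hr1
    have hxr : ‖x‖ / r < δ := by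
      rw [div_lt_iff₀ hrpos]
      rcases le_or_gt ‖x‖ 0 with h | h
      · nlinarith
      · have h2 : ‖x‖ / δ * 2 ≤ r := le_max_right _ _
        rw [div_mul_eq_mul_div, div_le_iff₀ hδ] at h2
        nlinarith
    have hmem : v - r⁻¹ • x ∈ C := by
      apply interior_subset (hballv ?_)
      rw [Metric.mem_ball, dist_eq_norm]
      have : v - r⁻¹ • x - v = -(r⁻¹ • x) := by abel
      rw [this, norm_neg, norm_smul, Real.norm_eq_abs, abs_of_pos (by positivity)]
      rw [inv_mul_eq_div]
      exact hxr
    have : r • v = x + r • (v - r⁻¹ • x) := by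
      rw [smul_sub, smul_smul, mul_inv_cancel₀ hrpos.ne', one_smul]
      abel
    rw [this]
    exact mem_of_add hK hx (hC.2.2.1 _ hmem r hrpos.le)
  -- closedness: S = closed set
  have hSclosed : sInf S ∈ S := by
    have h1 : S = {r : ℝ | r • v ∈ K} ∩ Set.Ici ε := by
      ext r
      constructor
      · intro hr; exact ⟨hr.2, hlb r hr⟩
      · intro hr; exact ⟨lt_of_lt_of_le hε hr.2, hr.1⟩
    have h2 : IsClosed S := by
      rw [h1]
      exact ((hK.2.1.preimage (by continuity : Continuous fun r : ℝ => r • v))).inter isClosed_Ici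
    exact h2.csInf_mem hSne hbdd
  refine ⟨hSclosed.1, hSclosed.2, fun r hr hrv => csInf_le hbdd ⟨hr, hrv⟩⟩


lemma suppFn_spec (hK : IsPseudoCone C K) {u : E n} (hu : u ∈ Omega (dualCone C)) :
    suppFn K u < 0 ∧ (∀ y ∈ K, (inner ℝ u y : ℝ) ≤ suppFn K u) ∧
    ∀ b : ℝ, (suppFn K u ≤ b ↔ ∀ y ∈ K, (inner ℝ u y : ℝ) ≤ b) := by
  obtain ⟨c, hc, hcb⟩ := dual_int_bound hu.2
  obtain ⟨ε, hε, hεK⟩ := exists_eps hK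
  have hb : ∀ y ∈ K, (inner ℝ u y : ℝ) ≤ -(c*ε) := fun y hy => by
    have h1 := hcb y (hK.2.2.2.1 hy)
    have h2 := hεK y hy
    nlinarith
  have hbdd : BddAbove ((fun y => (inner ℝ u y : ℝ)) '' K) :=
    ⟨-(c*ε), by rintro _ ⟨y, hy, rfl⟩; exact hb y hy⟩
  have hne : ((fun y => (inner ℝ u y : ℝ)) '' K).Nonempty := hK.1.image _
  refine ⟨?_, fun y hy => le_csSup hbdd ⟨y, hy, rfl⟩, fun b => ?_⟩
  · calc suppFn K u ≤ -(c*ε) := csSup_le hne (by rintro _ ⟨y, hy, rfl⟩; exact hb y hy)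
      _ < 0 := by nlinarith
  · rw [suppFn, csSup_le_iff hbdd hne]
    constructor
    · intro h y hy; exact h _ ⟨y, hy, rfl⟩
    · rintro h _ ⟨y, hy, rfl⟩; exact h y hy

lemma copolar_mem_iff (hK : IsPseudoCone C K) {u : E n} (hu : u ∈ Omega (dualCone C))
    {r : ℝ} (hr : 0 < r) :
    r • u ∈ copolar K ↔ suppFn K u * r ≤ -1 := by
  obtain ⟨hneg, hle, hiff⟩ := suppFn_spec hK hu
  constructor
  · intro h
    have h2 : suppFn K u ≤ -1 / r := by
      rw [hiff]
      intro y hy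
      have := h y hy
      rw [real_inner_smul_left] at this
      rw [le_div_iff₀ hr]
      linarith [this]
    rw [le_div_iff₀ hr] at h2
    linarith
  · intro h y hy
    rw [real_inner_smul_left]
    have := hle y hy
    nlinarith

lemma radial_copolar (hK : IsPseudoCone C K) {u : E n} (hu : u ∈ Omega (dualCone C)) :
    radial (copolar K) u = (-(suppFn K u))⁻¹ ∧ (-(suppFn K u))⁻¹ • u ∈ copolar K := by
  obtain ⟨hneg, hle, hiff⟩ := suppFn_spec hK hu
  set h := suppFn K u
  have hpos : (0:ℝ) < -h := by linarith
  have htpos : (0:ℝ) < (-h)⁻¹ := by positivity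
  have hset : {r : ℝ | 0 < r ∧ r • u ∈ copolar K} = Set.Ici ((-h)⁻¹) := by
    ext r
    simp only [Set.mem_setOf_eq, Set.mem_Ici]
    constructor
    · rintro ⟨hr, hmem⟩
      rw [copolar_mem_iff hK hu hr] at hmem
      rw [inv_le_iff_one_le_mul₀ hpos]
      nlinarith
    · intro hr
      have hrpos : 0 < r := lt_of_lt_of_le htpos hr
      refine ⟨hrpos, (copolar_mem_iff hK hu hrpos).mpr ?_⟩
      rw [inv_le_iff_one_le_mul₀ hpos] at hr
      nlinarith
  constructor
  · rw [radial, hset, csInf_Ici]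
  · have : (-h)⁻¹ ∈ {r : ℝ | 0 < r ∧ r • u ∈ copolar K} := by
      rw [hset]; exact Set.self_mem_Ici
    exact this.2

lemma sep_step (hC : IsGoodCone C) (hK : IsPseudoCone C K) {v : E n} (hv : v ∈ Omega C)
    {r : ℝ} (hr : 0 < r) (hrρ : r < radial K v) :
    ∃ z ∈ copolar K, -(r⁻¹) ≤ (inner ℝ v z : ℝ) := by
  obtain ⟨hρpos, hρmem, hρmin⟩ := radial_spec hC hK hv
  have hnot : r • v ∉ K := fun h => absurd (hρmin r hr h) (not_le.mpr hrρ)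
  obtain ⟨f, s', hfy, hfx⟩ := geometric_hahn_banach_closed_point hK.2.2.1 hK.2.1 hnot
  set w : E n := -((InnerProductSpace.toDual ℝ (E n)).symm f)
  have hw : ∀ x : E n, (inner ℝ w x : ℝ) = -(f x) := by
    intro x
    rw [inner_neg_left]
    congr 1
    exact InnerProductSpace.toDual_symm_apply
  set s : ℝ := -s'
  have hgy : ∀ a ∈ K, s < (inner ℝ w a : ℝ) := by
    intro a ha; rw [hw]; have := hfy a ha; simp only [s]; linarith
  have hgx : (inner ℝ w (r • v) : ℝ) < s := by rw [hw]; simp only [s]; linarith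
  -- Step 1: w is nonnegative on C
  have hCpos : ∀ c ∈ C, 0 ≤ (inner ℝ w c : ℝ) := by
    intro c hc
    by_contra hneg
    push_neg at hneg
    set q : ℝ := inner ℝ w c with hqdef
    set b : ℝ := radial K v * (inner ℝ w v : ℝ) with hbdef
    have hbs : s < b := by
      have := hgy _ hρmem
      rwa [real_inner_smul_right] at this
    set t : ℝ := (b - s) / (-q) + 1 with htdef
    have hq0 : q ≠ 0 := ne_of_lt hneg
    have htpos : 0 < t := by
      have h0 : 0 < (b - s)/(-q) := div_pos (by linarith) (by linarith)
      rw [htdef]; linarith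
    have hmem : radial K v • v + t • c ∈ K :=
      mem_of_add hK hρmem (hC.2.2.1 _ hc t htpos.le)
    have h2 := hgy _ hmem
    rw [inner_add_right, real_inner_smul_right, real_inner_smul_right] at h2
    have h3 : (b - s)/(-q) * q = -(b - s) := by
      rw [div_mul_eq_mul_div, div_neg, mul_div_assoc, div_self hq0, mul_one]
    have h4 : t * q = -(b - s) + q := by
      rw [htdef, add_mul, one_mul, h3]
    rw [← hbdef, ← hqdef] at h2
    linarith
  -- w ≠ 0
  have hw0 : w ≠ 0 := by
    intro h0
    have h1 := hgy _ hρmem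
    have h2 := hgx
    rw [h0] at h1 h2
    simp at h1 h2
    linarith
  -- Step 2: 0 < ⟨w, v⟩
  have hwv : 0 < (inner ℝ w v : ℝ) := by
    rcases lt_or_eq_of_le (hCpos v (interior_subset hv.2)) with h | h
    · exact h
    · exfalso
      obtain ⟨δ, hδ, hballv⟩ := Metric.isOpen_iff.mp isOpen_interior v hv.2
      have hnw : (0:ℝ) < ‖w‖ := norm_pos_iff.mpr hw0
      have hc : v - (δ/2) • (‖w‖⁻¹ • w) ∈ C := by
        apply interior_subset (hballv ?_)
        rw [Metric.mem_ball, dist_eq_norm]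
        have he : v - (δ/2) • (‖w‖⁻¹ • w) - v = -((δ/2) • (‖w‖⁻¹ • w)) := by abel
        rw [he, norm_neg, norm_smul, norm_smul, Real.norm_eq_abs, Real.norm_eq_abs,
          abs_of_nonneg (by positivity : (0:ℝ) ≤ δ/2),
          abs_of_nonneg (by positivity : (0:ℝ) ≤ ‖w‖⁻¹),
          inv_mul_cancel₀ hnw.ne']
        linarith
      have := hCpos _ hc
      rw [inner_sub_right, real_inner_smul_right, real_inner_smul_right,
        real_inner_self_eq_norm_sq, ← h] at this
      have h3 : ‖w‖⁻¹ * ‖w‖^2 = ‖w‖ := by field_simp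
      nlinarith
  -- Step 3: 0 < s
  have hspos : 0 < s := by
    have := hgx
    rw [real_inner_smul_right] at this
    nlinarith
  -- the witness
  refine ⟨-(s⁻¹) • w, fun y hy => ?_, ?_⟩
  · rw [real_inner_smul_left]
    have hys := hgy y hy
    have h1 : s⁻¹ * s ≤ s⁻¹ * (inner ℝ w y : ℝ) :=
      mul_le_mul_of_nonneg_left hys.le (by positivity)
    rw [inv_mul_cancel₀ hspos.ne'] at h1
    linarith
  · rw [real_inner_smul_right, real_inner_comm w v]
    have h1 : r * (inner ℝ w v : ℝ) < s := by
      have := hgx; rwa [real_inner_smul_right] at this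
    have h2 : s⁻¹ * (inner ℝ w v : ℝ) ≤ r⁻¹ := by
      rw [inv_mul_le_iff₀ hspos, ← div_eq_mul_inv, le_div_iff₀ hr, mul_comm]
      linarith
    linarith

lemma suppFn_copolar (hC : IsGoodCone C) (hK : IsPseudoCone C K) {u v : E n}
    (hu : u ∈ Omega (dualCone C)) (hv : v ∈ Omega C) :
    suppFn (copolar K) v = -(radial K v)⁻¹ ∧
    ∀ b : ℝ, (suppFn (copolar K) v ≤ b ↔ ∀ z ∈ copolar K, (inner ℝ v z : ℝ) ≤ b) := by
  obtain ⟨hρpos, hρmem, hρmin⟩ := radial_spec hC hK hv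
  set ρ := radial K v with hρdef
  have hub : ∀ z ∈ copolar K, (inner ℝ v z : ℝ) ≤ -ρ⁻¹ := by
    intro z hz
    have h1 := hz _ hρmem
    rw [real_inner_smul_right] at h1
    rw [real_inner_comm]
    have h2 : (inner ℝ z v : ℝ) ≤ -1/ρ := by
      rw [le_div_iff₀ hρpos]; linarith
    rw [neg_div, one_div] at h2
    linarith
  obtain ⟨-, hz0⟩ := radial_copolar hK hu
  have hne : ((fun z => (inner ℝ v z : ℝ)) '' copolar K).Nonempty := ⟨_, _, hz0, rfl⟩
  have hbdd : BddAbove ((fun z => (inner ℝ v z : ℝ)) '' copolar K) :=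
    ⟨-ρ⁻¹, by rintro _ ⟨z, hz, rfl⟩; exact hub z hz⟩
  have hiff : ∀ b : ℝ, (suppFn (copolar K) v ≤ b ↔ ∀ z ∈ copolar K, (inner ℝ v z : ℝ) ≤ b) := by
    intro b
    rw [suppFn, csSup_le_iff hbdd hne]
    constructor
    · intro h z hz; exact h _ ⟨z, hz, rfl⟩
    · rintro h _ ⟨z, hz, rfl⟩; exact h z hz
  refine ⟨le_antisymm ((hiff _).mpr hub) ?_, hiff⟩
  by_contra hcon
  push_neg at hcon
  set S := suppFn (copolar K) v with hSdef
  have hSneg : S < 0 := by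
    have : (0:ℝ) < ρ⁻¹ := by positivity
    linarith
  have hmS : (0:ℝ) < -S := by linarith
  have h1 : 1/(-S) < ρ := by
    rw [div_lt_iff₀ hmS]
    nlinarith [mul_inv_cancel₀ hρpos.ne']
  set r : ℝ := (1/(-S) + ρ)/2 with hrdef
  have h1S : 0 < 1/(-S) := div_pos one_pos hmS
  have hr0 : 0 < r := by rw [hrdef]; linarith
  have hrρ : r < ρ := by rw [hrdef]; linarith
  have h2 : 1/(-S) < r := by rw [hrdef]; linarith
  have h3 : S < -(r⁻¹) := by
    rw [div_lt_iff₀ hmS] at h2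
    nlinarith [mul_inv_cancel₀ hr0.ne']
  obtain ⟨z, hz, hzr⟩ := sep_step hC hK hv hr0 hrρ
  have h4 : (inner ℝ v z : ℝ) ≤ S := le_csSup hbdd ⟨z, hz, rfl⟩
  linarith

end Aux18

theorem stmt18 {n : ℕ} (C K : Set (E n)) (hC : IsGoodCone C) (hK : IsPseudoCone C K)
    (u v : E n) (hu : u ∈ Omega (dualCone C)) (hv : v ∈ Omega C) :
    (IsNormalAt K u (radial K v • v) ↔
      |(inner ℝ u v : ℝ)| * radial (copolar K) u = -(suppFn (copolar K) v)) ∧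
    (IsNormalAt K u (radial K v • v) ↔
      IsNormalAt (copolar K) v (radial (copolar K) u • u)) := by
  obtain ⟨hρpos, hρmem, hρmin⟩ := Aux18.radial_spec hC hK hv
  obtain ⟨hhneg, hhle, hhiff⟩ := Aux18.suppFn_spec hK hu
  obtain ⟨hrceq, hrcmem⟩ := Aux18.radial_copolar hK hu
  obtain ⟨hsc, hsciff⟩ := Aux18.suppFn_copolar hC hK hu hv
  set ρ := radial K v with hρdef
  set h := suppFn K u with hhdef
  obtain ⟨c, hc, hcb⟩ := Aux18.dual_int_bound hu.2
  have huv : (inner ℝ u v : ℝ) < 0 := by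
    have := hcb v (interior_subset hv.2); rw [hv.1, mul_one] at this; linarith
  set a : ℝ := -(inner ℝ u v : ℝ) with hadef
  have hapos : 0 < a := by rw [hadef]; linarith
  have habs : |(inner ℝ u v : ℝ)| = a := abs_of_neg huv
  have hmh : 0 < -h := by linarith
  have ha2 : ρ * (inner ℝ u v : ℝ) = -(ρ * a) := by rw [hadef]; ring
  have halw : -(ρ * a) ≤ h := by
    have := hhle _ hρmem
    rw [real_inner_smul_right] at this
    linarith [ha2]
  have hP : IsNormalAt K u (ρ • v) ↔ h ≤ -(ρ * a) := by
    constructor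
    · rintro ⟨-, hn⟩
      rw [hhiff]
      intro y hy
      have := hn y hy
      rw [inner_sub_right, real_inner_smul_right] at this
      linarith [ha2]
    · intro hle2
      refine ⟨hρmem, fun y hy => ?_⟩
      rw [inner_sub_right, real_inner_smul_right]
      have := hhle y hy
      have h2 := (hhiff _).mp hle2
      linarith [ha2]
  have hiff1 : (a * (-h)⁻¹ ≤ ρ⁻¹) ↔ ρ * a ≤ -h := by
    rw [← div_eq_mul_inv, ← one_div ρ, div_le_div_iff₀ hmh hρpos]
    constructor <;> intro <;> nlinarith
  have hiff2 : (ρ⁻¹ ≤ a * (-h)⁻¹) ↔ -h ≤ ρ * a := by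
    rw [← div_eq_mul_inv, ← one_div ρ, div_le_div_iff₀ hρpos hmh]
    constructor <;> intro <;> nlinarith
  have halw2 : ρ⁻¹ ≤ a * (-h)⁻¹ := hiff2.mpr (by linarith)
  constructor
  · rw [hP, habs, hrceq, hsc, neg_neg]
    constructor
    · intro hle2
      exact le_antisymm (hiff1.mpr (by linarith)) halw2
    · intro heq
      have := hiff1.mp (le_of_eq heq)
      linarith
  · rw [hP, hrceq]
    have hcomm : (inner ℝ v u : ℝ) = inner ℝ u v := real_inner_comm u v
    have h6 : (-h)⁻¹ * (inner ℝ u v : ℝ) = -(a * (-h)⁻¹) := by rw [hadef]; ring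
    constructor
    · intro hle2
      refine ⟨hrcmem, fun z hz => ?_⟩
      rw [inner_sub_right, real_inner_smul_right, hcomm]
      have hbz : (inner ℝ v z : ℝ) ≤ -ρ⁻¹ := by
        rw [← hsc]; exact (hsciff _).mp le_rfl z hz
      have h5 : a * (-h)⁻¹ ≤ ρ⁻¹ := hiff1.mpr (by linarith)
      linarith
    · rintro ⟨-, hn⟩
      have h7 : suppFn (copolar K) v ≤ (-h)⁻¹ * (inner ℝ u v : ℝ) := by
        rw [hsciff]
        intro z hz
        have := hn z hz
        rw [inner_sub_right, real_inner_smul_right, hcomm] at this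
        linarith
      rw [hsc] at h7
      have h8 : a * (-h)⁻¹ ≤ ρ⁻¹ := by linarith
      have := hiff1.mp h8
      linarith
end
end

section
/- Let (K_j) be a sequence of C-pseudo-cones converging (in the sense that K_j ∩ tB^n → K_0 ∩ tB^n in Hausdorff distance for all large t) to a C-pseudo-cone K_0, each K_j at distance 1 from the origin. Let u ∈ Ω_{C°} be such that for each j ∈ ℕ∪{0}, u is a normal vector of K_j at exactly one boundary point x_j = ρ_{K_j}(v_j)v_j with v_j ∈ Ω_C. Then v_j → v_0 as j → ∞ (i.e., the reverse radial Gauss maps converge pointwise: α*_{K_j}(u) → α*_{K_0}(u)). -/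
open Set Metric Pointwise

noncomputable section

lemma inner_neg_on_cone {n : ℕ} {C : Set (E n)} {u : E n}
    (hu : u ∈ interior (dualCone C)) :
    ∃ c > (0:ℝ), ∀ y ∈ C, (inner ℝ u y : ℝ) ≤ -(c * ‖y‖) := by
  rcases Metric.mem_nhds_iff.1 (mem_interior_iff_mem_nhds.1 hu) with ⟨ε, hε, hball⟩
  refine ⟨ε/2, by positivity, fun y hy => ?_⟩
  rcases eq_or_ne y 0 with rfl|hy0
  · simp
  have hyn : (0:ℝ) < ‖y‖ := norm_pos_iff.2 hy0
  have hw : u + (ε/2 * ‖y‖⁻¹) • y ∈ Metric.ball u ε := by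
    rw [Metric.mem_ball, dist_eq_norm]
    have : u + (ε/2 * ‖y‖⁻¹) • y - u = (ε/2 * ‖y‖⁻¹) • y := by abel
    rw [this, norm_smul, Real.norm_eq_abs, abs_of_pos (by positivity)]
    rw [mul_assoc, inv_mul_cancel₀ (ne_of_gt hyn), mul_one]
    linarith
  have h1 := hball hw y hy
  have h2 : (inner ℝ (u + (ε/2 * ‖y‖⁻¹) • y) y : ℝ)
      = inner ℝ u y + (ε/2 * ‖y‖⁻¹) * (‖y‖ * ‖y‖) := by
    rw [inner_add_left, real_inner_smul_left, real_inner_self_eq_norm_mul_norm]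
  rw [h2] at h1
  have h3 : (ε/2 * ‖y‖⁻¹) * (‖y‖ * ‖y‖) = ε/2 * ‖y‖ := by
    field_simp
  rw [h3] at h1
  linarith

theorem stmt19 {n : ℕ} (C : Set (E n)) (hC : IsGoodCone C)
    (K : ℕ → Set (E n)) (K0 : Set (E n))
    (hK : ∀ j, IsPseudoCone C (K j)) (hK0 : IsPseudoCone C K0)
    (hdist : ∀ j, Metric.infDist 0 (K j) = 1) (hdist0 : Metric.infDist 0 K0 = 1)
    (t0 : ℝ) (ht0 : 0 < t0)
    (hconv : ∀ t ≥ t0, Filter.Tendsto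
      (fun j => Metric.hausdorffDist (K j ∩ Metric.closedBall 0 t) (K0 ∩ Metric.closedBall 0 t))
      Filter.atTop (nhds 0))
    (u : E n) (hu : u ∈ Omega (dualCone C))
    (v : ℕ → E n) (v0 : E n) (hv : ∀ j, v j ∈ Omega C) (hv0 : v0 ∈ Omega C)
    (hnormal : ∀ j, IsNormalAt (K j) u (radial (K j) (v j) • v j))
    (hnormal0 : IsNormalAt K0 u (radial K0 v0 • v0))
    (huniq : ∀ j, ∃! x, IsNormalAt (K j) u x)
    (huniq0 : ∃! x, IsNormalAt K0 u x) :
    Filter.Tendsto v Filter.atTop (nhds v0) := by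
  classical
  have hu1 : ‖u‖ = 1 := hu.1
  obtain ⟨c, hc, hcone⟩ := inner_neg_on_cone hu.2
  set x : ℕ → E n := fun j => radial (K j) (v j) • v j with hxdef
  set x0 : E n := radial K0 v0 • v0 with hx0def
  have hxK : ∀ j, x j ∈ K j := fun j => (hnormal j).1
  have hx0K : x0 ∈ K0 := hnormal0.1
  have hmax : ∀ j, ∀ y ∈ K j, (inner ℝ u y : ℝ) ≤ inner ℝ u (x j) := by
    intro j y hy
    have h := (hnormal j).2 y hy
    rw [inner_sub_right] at h; linarith
  have hxnorm : ∀ j, 1 ≤ ‖x j‖ := by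
    intro j
    calc (1:ℝ) = Metric.infDist 0 (K j) := (hdist j).symm
    _ ≤ dist 0 (x j) := Metric.infDist_le_dist_of_mem (hxK j)
    _ = ‖x j‖ := by rw [dist_eq_norm, zero_sub, norm_neg]
  have hx0norm : 1 ≤ ‖x0‖ := by
    calc (1:ℝ) = Metric.infDist 0 K0 := hdist0.symm
    _ ≤ dist 0 x0 := Metric.infDist_le_dist_of_mem hx0K
    _ = ‖x0‖ := by rw [dist_eq_norm, zero_sub, norm_neg]
  have hKne : ∀ j, (K j).Nonempty := fun j => (hK j).1
  have hK0ne : K0.Nonempty := hK0.1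
  have hint_ne : ∀ t, (2:ℝ) ≤ t → ∀ j, (K j ∩ Metric.closedBall 0 t).Nonempty := by
    intro t ht j
    have h1 : Metric.infDist 0 (K j) < 2 := by rw [hdist j]; norm_num
    obtain ⟨y, hy, hyd⟩ := (Metric.infDist_lt_iff (hKne j)).1 h1
    exact ⟨y, hy, by rw [Metric.mem_closedBall, dist_comm]; linarith⟩
  have hint0_ne : ∀ t, (2:ℝ) ≤ t → (K0 ∩ Metric.closedBall 0 t).Nonempty := by
    intro t ht
    have h1 : Metric.infDist 0 K0 < 2 := by rw [hdist0]; norm_num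
    obtain ⟨y, hy, hyd⟩ := (Metric.infDist_lt_iff hK0ne).1 h1
    exact ⟨y, hy, by rw [Metric.mem_closedBall, dist_comm]; linarith⟩
  have hedist : ∀ t, (2:ℝ) ≤ t → ∀ j,
      Metric.hausdorffEDist (K j ∩ Metric.closedBall 0 t) (K0 ∩ Metric.closedBall 0 t) ≠ ⊤ :=
    fun t ht j => Metric.hausdorffEdist_ne_top_of_nonempty_of_bounded
      (hint_ne t ht j) (hint0_ne t ht)
      (Metric.isBounded_closedBall.subset inter_subset_right)
      (Metric.isBounded_closedBall.subset inter_subset_right)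
  have hedist' : ∀ t, (2:ℝ) ≤ t → ∀ j,
      Metric.hausdorffEDist (K0 ∩ Metric.closedBall 0 t) (K j ∩ Metric.closedBall 0 t) ≠ ⊤ := by
    intro t ht j; rw [Metric.hausdorffEDist_comm]; exact hedist t ht j
  -- eventual bound on ‖x j‖
  obtain ⟨p, hpK0, hpd⟩ : ∃ p ∈ K0, dist 0 p < 2 := by
    have h1 : Metric.infDist 0 K0 < 2 := by rw [hdist0]; norm_num
    exact (Metric.infDist_lt_iff hK0ne).1 h1
  have hpn : ‖p‖ < 2 := by rwa [dist_eq_norm, zero_sub, norm_neg] at hpd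
  set t1 : ℝ := max t0 2 with ht1def
  have ht1t0 : t0 ≤ t1 := le_max_left _ _
  have ht12 : (2:ℝ) ≤ t1 := le_max_right _ _
  have hpmem : p ∈ K0 ∩ Metric.closedBall 0 t1 :=
    ⟨hpK0, by rw [Metric.mem_closedBall, dist_comm]; linarith⟩
  set R : ℝ := 3 / c with hRdef
  have hRpos : 0 < R := by positivity
  have hbound : ∀ᶠ j in Filter.atTop, ‖x j‖ ≤ R := by
    have h1 := (hconv t1 ht1t0).eventually (gt_mem_nhds one_pos)
    filter_upwards [h1] with j hj
    have h2 : Metric.infDist p (K j ∩ Metric.closedBall 0 t1) < 1 := by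
      calc Metric.infDist p (K j ∩ Metric.closedBall 0 t1)
          ≤ Metric.hausdorffDist (K0 ∩ Metric.closedBall 0 t1) (K j ∩ Metric.closedBall 0 t1) :=
            Metric.infDist_le_hausdorffDist_of_mem hpmem (hedist' t1 ht12 j)
      _ = Metric.hausdorffDist (K j ∩ Metric.closedBall 0 t1) (K0 ∩ Metric.closedBall 0 t1) :=
            Metric.hausdorffDist_comm
      _ < 1 := hj
    obtain ⟨q, hq, hqd⟩ := (Metric.infDist_lt_iff (hint_ne t1 ht12 j)).1 h2
    have hpq : ‖p - q‖ < 1 := by rwa [← dist_eq_norm]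
    have e1 : (inner ℝ u (p - q) : ℝ) ≤ ‖p - q‖ := by
      calc (inner ℝ u (p - q) : ℝ) ≤ ‖u‖ * ‖p - q‖ := real_inner_le_norm _ _
      _ = ‖p - q‖ := by rw [hu1, one_mul]
    have e2 : -(1 : ℝ) * ‖p‖ ≤ inner ℝ u p := by
      have := neg_le_of_abs_le (abs_real_inner_le_norm u p)
      rw [hu1, one_mul] at this; linarith
    rw [inner_sub_right] at e1
    have e3 : (-3 : ℝ) ≤ inner ℝ u q := by linarith
    have e4 : (-3 : ℝ) ≤ inner ℝ u (x j) := le_trans e3 (hmax j q hq.1)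
    have e5 : (inner ℝ u (x j) : ℝ) ≤ -(c * ‖x j‖) := hcone _ ((hK j).2.2.2.1 (hxK j))
    have : c * ‖x j‖ ≤ 3 := by linarith
    rw [hRdef, le_div_iff₀ hc]
    linarith [mul_comm c ‖x j‖]
  -- the points x j converge to x0
  have hxtend : Filter.Tendsto x Filter.atTop (nhds x0) := by
    apply Filter.tendsto_of_subseq_tendsto
    intro ns hns
    obtain ⟨N, hN⟩ := Filter.eventually_atTop.1 hbound
    obtain ⟨N', hN'⟩ := Filter.eventually_atTop.1 (hns.eventually_ge_atTop N)
    have hwmem : ∀ k : ℕ, x (ns (k + N')) ∈ Metric.closedBall (0 : E n) R := by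
      intro k
      rw [mem_closedBall_zero_iff]
      exact hN _ (hN' (k + N') (Nat.le_add_left N' k))
    obtain ⟨xs, _, φ, hφ, hwφ⟩ :=
      (isCompact_closedBall (0:E n) R).tendsto_subseq hwmem
    refine ⟨fun k => φ k + N', ?_⟩
    have hkey : Filter.Tendsto (fun k => x (ns (φ k + N'))) Filter.atTop (nhds xs) := hwφ
    have hjk : Filter.Tendsto (fun k => ns (φ k + N')) Filter.atTop Filter.atTop :=
      hns.comp (Filter.tendsto_atTop_mono (fun k => Nat.le_add_right (φ k) N')
        hφ.tendsto_atTop)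
    have hjkN : ∀ k, N ≤ ns (φ k + N') := fun k => hN' _ (Nat.le_add_left N' (φ k))
    set t2 : ℝ := max t1 R with ht2def
    have ht2t0 : t0 ≤ t2 := le_trans ht1t0 (le_max_left _ _)
    have ht22 : (2:ℝ) ≤ t2 := le_trans ht12 (le_max_left _ _)
    have hRt2 : R ≤ t2 := le_max_right _ _
    have hxmem : ∀ k, x (ns (φ k + N')) ∈
        K (ns (φ k + N')) ∩ Metric.closedBall 0 t2 := by
      intro k
      exact ⟨hxK _, mem_closedBall_zero_iff.2 (le_trans (hN _ (hjkN k)) hRt2)⟩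
    -- xs ∈ K0
    have hxs_mem : xs ∈ K0 := by
      have hclosed : IsClosed (K0 ∩ Metric.closedBall 0 t2) :=
        hK0.2.1.inter Metric.isClosed_closedBall
      have hne0 := hint0_ne t2 ht22
      have hle : ∀ k, Metric.infDist xs (K0 ∩ Metric.closedBall 0 t2) ≤
          Metric.hausdorffDist (K (ns (φ k + N')) ∩ Metric.closedBall 0 t2)
            (K0 ∩ Metric.closedBall 0 t2) + dist xs (x (ns (φ k + N'))) := by
        intro k
        calc Metric.infDist xs (K0 ∩ Metric.closedBall 0 t2)
            ≤ Metric.infDist (x (ns (φ k + N'))) (K0 ∩ Metric.closedBall 0 t2)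
              + dist xs (x (ns (φ k + N'))) := Metric.infDist_le_infDist_add_dist
        _ ≤ _ := by
          gcongr
          exact Metric.infDist_le_hausdorffDist_of_mem (hxmem k) (hedist t2 ht22 _)
      have htend : Filter.Tendsto (fun k =>
          Metric.hausdorffDist (K (ns (φ k + N')) ∩ Metric.closedBall 0 t2)
            (K0 ∩ Metric.closedBall 0 t2) + dist xs (x (ns (φ k + N'))))
          Filter.atTop (nhds 0) := by
        have h1 := (hconv t2 ht2t0).comp hjk
        have h2 : Filter.Tendsto (fun k => dist xs (x (ns (φ k + N'))))
            Filter.atTop (nhds 0) := by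
          have := (tendsto_iff_dist_tendsto_zero).1 hkey
          simpa [dist_comm] using this
        simpa using h1.add h2
      have h0 : Metric.infDist xs (K0 ∩ Metric.closedBall 0 t2) ≤ 0 :=
        le_of_tendsto_of_tendsto' tendsto_const_nhds htend hle
      have heq : Metric.infDist xs (K0 ∩ Metric.closedBall 0 t2) = 0 :=
        le_antisymm h0 Metric.infDist_nonneg
      exact ((hclosed.mem_iff_infDist_zero hne0).2 heq).1
    -- xs is a normal point of K0 at u
    have hxs_normal : IsNormalAt K0 u xs := by
      refine ⟨hxs_mem, fun y hy => ?_⟩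
      rw [inner_sub_right]
      have key : ∀ ε > (0:ℝ), (inner ℝ u y : ℝ) - inner ℝ u xs ≤ 2 * ε := by
        intro ε hε
        set t3 : ℝ := max t2 ‖y‖ with ht3def
        have ht3t0 : t0 ≤ t3 := le_trans ht2t0 (le_max_left _ _)
        have ht32 : (2:ℝ) ≤ t3 := le_trans ht22 (le_max_left _ _)
        have hRt3 : R ≤ t3 := le_trans hRt2 (le_max_left _ _)
        have hymem : y ∈ K0 ∩ Metric.closedBall 0 t3 :=
          ⟨hy, mem_closedBall_zero_iff.2 (le_max_right _ _)⟩
        have h1 : ∀ᶠ k in Filter.atTop,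
            Metric.hausdorffDist (K (ns (φ k + N')) ∩ Metric.closedBall 0 t3)
              (K0 ∩ Metric.closedBall 0 t3) < ε :=
          ((hconv t3 ht3t0).comp hjk).eventually (gt_mem_nhds hε)
        have h2 : ∀ᶠ k in Filter.atTop, dist (x (ns (φ k + N'))) xs < ε :=
          hkey.eventually (Metric.ball_mem_nhds xs hε)
        obtain ⟨k, hk1, hk2⟩ := (h1.and h2).exists
        have hinf : Metric.infDist y (K (ns (φ k + N')) ∩ Metric.closedBall 0 t3) < ε := by
          calc Metric.infDist y (K (ns (φ k + N')) ∩ Metric.closedBall 0 t3)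
              ≤ Metric.hausdorffDist (K0 ∩ Metric.closedBall 0 t3)
                (K (ns (φ k + N')) ∩ Metric.closedBall 0 t3) :=
                Metric.infDist_le_hausdorffDist_of_mem hymem (hedist' t3 ht32 _)
          _ = _ := Metric.hausdorffDist_comm
          _ < ε := hk1
        obtain ⟨q, hq, hqd⟩ := (Metric.infDist_lt_iff (hint_ne t3 ht32 _)).1 hinf
        have e1 : (inner ℝ u y : ℝ) - inner ℝ u q ≤ ε := by
          have h3 : (inner ℝ u (y - q) : ℝ) ≤ ‖u‖ * ‖y - q‖ := real_inner_le_norm _ _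
          rw [inner_sub_right, hu1, one_mul, ← dist_eq_norm] at h3
          linarith
        have e2 : (inner ℝ u q : ℝ) ≤ inner ℝ u (x (ns (φ k + N'))) := hmax _ q hq.1
        have e3 : (inner ℝ u (x (ns (φ k + N'))) : ℝ) - inner ℝ u xs ≤ ε := by
          have h3 : (inner ℝ u (x (ns (φ k + N')) - xs) : ℝ)
              ≤ ‖u‖ * ‖x (ns (φ k + N')) - xs‖ := real_inner_le_norm _ _
          rw [inner_sub_right, hu1, one_mul, ← dist_eq_norm] at h3
          linarith
        linarith
      by_contra hpos
      push_neg at hpos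
      have := key (((inner ℝ u y : ℝ) - inner ℝ u xs)/4) (by linarith)
      linarith
    obtain ⟨z, _, hzu⟩ := huniq0
    have hxseq : xs = x0 := (hzu xs hxs_normal).trans (hzu x0 hnormal0).symm
    exact hxseq ▸ hkey
  -- recover convergence of the v j
  have hrpos : ∀ j, 0 < radial (K j) (v j) := by
    intro j
    have hne : radial (K j) (v j) ≠ 0 := by
      intro h
      apply (hK j).2.2.2.2.1
      have hx := hxK j
      rw [show x j = radial (K j) (v j) • v j from rfl, h, zero_smul] at hx
      exact hx
    have hnn : 0 ≤ radial (K j) (v j) := Real.sInf_nonneg (fun r hr => le_of_lt hr.1)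
    exact lt_of_le_of_ne hnn (Ne.symm hne)
  have hrpos0 : 0 < radial K0 v0 := by
    have hne : radial K0 v0 ≠ 0 := by
      intro h
      apply hK0.2.2.2.2.1
      have hx := hx0K
      rw [show x0 = radial K0 v0 • v0 from rfl, h, zero_smul] at hx
      exact hx
    have hnn : 0 ≤ radial K0 v0 := Real.sInf_nonneg (fun r hr => le_of_lt hr.1)
    exact lt_of_le_of_ne hnn (Ne.symm hne)
  have hvx : ∀ j, v j = ‖x j‖⁻¹ • x j := by
    intro j
    have hxn : ‖x j‖ = radial (K j) (v j) := by
      rw [show x j = radial (K j) (v j) • v j from rfl, norm_smul, (hv j).1, mul_one,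
        Real.norm_eq_abs, abs_of_pos (hrpos j)]
    rw [hxn, show x j = radial (K j) (v j) • v j from rfl, smul_smul,
      inv_mul_cancel₀ (ne_of_gt (hrpos j)), one_smul]
  have hvx0 : v0 = ‖x0‖⁻¹ • x0 := by
    have hxn : ‖x0‖ = radial K0 v0 := by
      rw [show x0 = radial K0 v0 • v0 from rfl, norm_smul, hv0.1, mul_one,
        Real.norm_eq_abs, abs_of_pos hrpos0]
    rw [hxn, show x0 = radial K0 v0 • v0 from rfl, smul_smul,
      inv_mul_cancel₀ (ne_of_gt hrpos0), one_smul]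
  have hx0ne : ‖x0‖ ≠ 0 := by intro h; rw [h] at hx0norm; linarith
  have hcont : ContinuousAt (fun z : E n => ‖z‖⁻¹ • z) x0 :=
    ((continuousAt_id.norm).inv₀ hx0ne).smul continuousAt_id
  have hcomp := hcont.tendsto.comp hxtend
  have : Filter.Tendsto (fun j => ‖x j‖⁻¹ • x j) Filter.atTop (nhds (‖x0‖⁻¹ • x0)) := hcomp
  rw [← hvx0] at this
  exact this.congr (fun j => (hvx j).symm)
end
end
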